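/- arXiv:2304.08819 — 5 statements merged into one kernel-verified Lean document; each statement's English description precedes it below -/
import Mathlib

section
/- Assume (1+θ)·∫_{(0,∞)} z dμ_F̂(z) < ∞. Then for every admissible indemnity I ∈ 𝒜, the extended distortion premium c(I) := (1+θ₀)·∫₀^∞ g( μ_F({x ∈ [0,∞) : I(x) > t}) ) dt satisfies c(I) = (1+θ)·∫_{(0,∞)} I(z) dμ_F̂(z) < ∞. -/
open MeasureTheory Set Filter Topology
open scoped ENNReal

noncomputable section

/-- The admissible set 𝒜: functions `H : [0,∞) → [0,∞)` with `H 0 = 0` that are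
nondecreasing and 1-Lipschitz (extended to `ℝ`, with the conditions imposed on `[0,∞)`). -/
def Adm : Set (ℝ → ℝ) :=
  {H | H 0 = 0 ∧ (∀ z, 0 ≤ z → 0 ≤ H z) ∧ MonotoneOn H (Set.Ici 0) ∧
    LipschitzOnWith 1 H (Set.Ici 0)}

/-- The objective functional
`J_a(H) = ∫_{(0,∞)} ((a/2)·H² + H) dμ_F − (1+θ)·∫_{(0,∞)} H dμ_F̂`, valued in `EReal`. -/
def Jfun (μF μFhat : Measure ℝ) (θ a : ℝ) (H : ℝ → ℝ) : EReal :=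
  ((∫⁻ z in Set.Ioi (0:ℝ), ENNReal.ofReal (a / 2 * H z ^ 2 + H z) ∂μF : ℝ≥0∞) : EReal)
    - ((ENNReal.ofReal (1 + θ) * ∫⁻ z in Set.Ioi (0:ℝ), ENNReal.ofReal (H z) ∂μFhat : ℝ≥0∞) : EReal)

/-- `v(a) = inf_{H ∈ 𝒜} J_a(H)`. -/
def vfun (μF μFhat : Measure ℝ) (θ : ℝ) (a : ℝ) : EReal :=
  ⨅ H ∈ Adm, Jfun μF μFhat θ a H

lemma meas_Ioi_aux (f : StieltjesFunction ℝ) (hneg : ∀ z : ℝ, z < 0 → f z = 0)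
    (hf : Tendsto (fun z => f z) atTop (nhds 1)) (a : ℝ) (ha : 0 ≤ f a) :
    f.measure (Set.Ioi a) = ENNReal.ofReal (1 - f a) := by
  have hbot : Tendsto (fun z => f z) atBot (nhds 0) := by
    refine Tendsto.congr' ?_ tendsto_const_nhds
    filter_upwards [eventually_le_atBot (-1 : ℝ)] with z hz
    exact (hneg z (by linarith)).symm
  have huniv : f.measure Set.univ = ENNReal.ofReal 1 := by
    simpa using f.measure_univ hbot hf
  have hIic : f.measure (Set.Iic a) = ENNReal.ofReal (f a) := by
    simpa using f.measure_Iic hbot a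
  have : f.measure (Set.Ioi a) = f.measure Set.univ - f.measure (Set.Iic a) := by
    rw [← Set.compl_Iic]
    exact measure_compl measurableSet_Iic (by simp [hIic])
  rw [this, huniv, hIic, ← ENNReal.ofReal_sub 1 ha]

/-- under the finite-moment assumption on μ_F̂, for every admissible
indemnity I ∈ 𝒜, the extended distortion premium satisfies
c(I) = (1+θ)·∫_{(0,∞)} I dμ_F̂ < ∞. -/
theorem stmt_1
    (F Fhat : StieltjesFunction ℝ) (g : ℝ → ℝ) (θ0 θ : ℝ)
    (hF_neg : ∀ z : ℝ, z < 0 → F z = 0)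
    (hF_top : Tendsto (fun z => F z) atTop (nhds 1))
    (hg_mono : MonotoneOn g (Set.Icc 0 1))
    (hg_left : ∀ p ∈ Set.Ioc (0:ℝ) 1, Tendsto g (nhdsWithin p (Set.Iio p)) (nhds (g p)))
    (hg_zero : g 0 = 0)
    (hg_zero' : Tendsto g (nhdsWithin 0 (Set.Ioi 0)) (nhds 0))
    (hg_one : g 1 = 1)
    (hg_pos : 0 < g (1 - F 0))
    (hθ0 : -1 < θ0)
    (hθ : θ = (1 + θ0) * g (1 - F 0) - 1)
    (hFhat : ∀ z : ℝ, Fhat z = if z < 0 then 0 else 1 - g (1 - F z) / g (1 - F 0))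
    (hFhat_top : Tendsto (fun z => Fhat z) atTop (nhds 1))
    (hfin : ENNReal.ofReal (1 + θ) *
        (∫⁻ z in Set.Ioi (0:ℝ), ENNReal.ofReal z ∂Fhat.measure) < ⊤)
    (I : ℝ → ℝ) (hI : I ∈ Adm) :
    ENNReal.ofReal (1 + θ0) *
        (∫⁻ t in Set.Ioi (0:ℝ),
          ENNReal.ofReal (g ((F.measure {x : ℝ | 0 ≤ x ∧ t < I x}).toReal))) =
      ENNReal.ofReal (1 + θ) *
        (∫⁻ z in Set.Ioi (0:ℝ), ENNReal.ofReal (I z) ∂Fhat.measure) ∧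
    ENNReal.ofReal (1 + θ) *
        (∫⁻ z in Set.Ioi (0:ℝ), ENNReal.ofReal (I z) ∂Fhat.measure) < ⊤ := by
  obtain ⟨hI0, hInn, hImono, hIlip⟩ := hI
  have h1θ0 : (0:ℝ) < 1 + θ0 := by linarith
  have h1θ : (0:ℝ) < 1 + θ := by
    rw [hθ]; have := mul_pos h1θ0 hg_pos; linarith
  -- I z ≤ z for z ≥ 0
  have hIle : ∀ z : ℝ, 0 ≤ z → I z ≤ z := by
    intro z hz
    have := hIlip.dist_le_mul z (Set.mem_Ici.mpr hz) 0 (Set.mem_Ici.mpr le_rfl)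
    rw [hI0] at this
    simp only [NNReal.coe_one, one_mul, Real.dist_eq, sub_zero] at this
    calc I z ≤ |I z| := le_abs_self _
    _ ≤ |z| := this
    _ = z := abs_of_nonneg hz
  -- basic facts about F
  have hF0le : ∀ a : ℝ, 0 ≤ F a → F a ≤ 1 := fun a _ =>
    ge_of_tendsto hF_top (eventually_atTop.2 ⟨a, fun x hx => F.mono hx⟩)
  have hFnn : ∀ a : ℝ, 0 ≤ a → 0 ≤ F a := by
    intro a ha
    rw [← hF_neg (-1) (by norm_num)]
    exact F.mono (by linarith)
  have hFle1 : ∀ a : ℝ, 0 ≤ a → F a ≤ 1 := fun a ha => hF0le a (hFnn a ha)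
  have hmem : ∀ a : ℝ, 0 ≤ a → (1 - F a) ∈ Set.Icc (0:ℝ) 1 :=
    fun a ha => ⟨by linarith [hFle1 a ha], by linarith [hFnn a ha]⟩
  have hgnn : ∀ a : ℝ, 0 ≤ a → 0 ≤ g (1 - F a) := by
    intro a ha
    rw [← hg_zero]
    exact hg_mono (by norm_num) (hmem a ha) (hmem a ha).1
  -- pointwise key identity
  have key : ∀ t : ℝ, t ∈ Set.Ioi (0:ℝ) →
      ENNReal.ofReal (1 + θ0) *
        ENNReal.ofReal (g ((F.measure {x : ℝ | 0 ≤ x ∧ t < I x}).toReal)) =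
      ENNReal.ofReal (1 + θ) * Fhat.measure {x : ℝ | 0 ≤ x ∧ t < I x} := by
    intro t ht
    simp only [Set.mem_Ioi] at ht
    set A : Set ℝ := {x : ℝ | 0 ≤ x ∧ t < I x} with hAdef
    rcases Set.eq_empty_or_nonempty A with hA | hne
    · rw [hA]; simp [hg_zero]
    · have hbdd : BddBelow A := ⟨0, fun x hx => hx.1⟩
      have hta : ∀ x ∈ A, t ≤ x := fun x hx => le_of_lt (lt_of_lt_of_le hx.2 (hIle x hx.1))
      set a := sInf A with hadef
      have hat : t ≤ a := le_csInf hne hta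
      have ha0 : 0 < a := lt_of_lt_of_le ht hat
      have hAeq : A = Set.Ioi a := by
        apply Set.Subset.antisymm
        · intro x hx
          have hle : a ≤ x := csInf_le hbdd hx
          rcases eq_or_lt_of_le hle with heq | hlt
          · exfalso
            -- a ∈ A leads to contradiction
            rw [← heq] at hx
            obtain ⟨ha0', hta'⟩ := hx
            set δ := min ((I a - t) / 2) (a / 2) with hδdef
            have hδpos : 0 < δ := lt_min (by linarith) (by linarith)
            have hδa : δ ≤ a / 2 := min_le_right _ _
            have hδI : δ ≤ (I a - t) / 2 := min_le_left _ _
            have hy0 : 0 < a - δ := by linarith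
            have hdist := hIlip.dist_le_mul a (Set.mem_Ici.mpr ha0') (a - δ)
              (Set.mem_Ici.mpr (le_of_lt hy0))
            simp only [NNReal.coe_one, one_mul, Real.dist_eq] at hdist
            have habs : I a - I (a - δ) ≤ δ := by
              calc I a - I (a - δ) ≤ |I a - I (a - δ)| := le_abs_self _
              _ ≤ |a - (a - δ)| := hdist
              _ = δ := by rw [show a - (a - δ) = δ by ring, abs_of_pos hδpos]
            have hyA : (a - δ) ∈ A := ⟨le_of_lt hy0, by linarith⟩
            have := csInf_le hbdd hyA
            linarith
          · exact hlt
        · intro x hx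
          simp only [Set.mem_Ioi] at hx
          obtain ⟨y, hyA, hyx⟩ := exists_lt_of_csInf_lt hne hx
          exact ⟨le_trans hyA.1 (le_of_lt hyx),
            lt_of_lt_of_le hyA.2 (hImono hyA.1 (le_trans hyA.1 (le_of_lt hyx)) (le_of_lt hyx))⟩
      rw [hAeq]
      have hFhat_neg : ∀ z : ℝ, z < 0 → Fhat z = 0 := by
        intro z hz; rw [hFhat z, if_pos hz]
      have hFa : F.measure (Set.Ioi a) = ENNReal.ofReal (1 - F a) :=
        meas_Ioi_aux F hF_neg hF_top a (hFnn a (le_of_lt ha0))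
      have hFhata : Fhat a = 1 - g (1 - F a) / g (1 - F 0) := by
        rw [hFhat a, if_neg (not_lt.mpr (le_of_lt ha0))]
      have hFhatnn : 0 ≤ Fhat a := by
        rw [← hFhat_neg (-1) (by norm_num)]
        exact Fhat.mono (by linarith)
      have hFhatm : Fhat.measure (Set.Ioi a) = ENNReal.ofReal (1 - Fhat a) :=
        meas_Ioi_aux Fhat hFhat_neg hFhat_top a hFhatnn
      rw [hFa, hFhatm, hFhata]
      have htoReal : (ENNReal.ofReal (1 - F a)).toReal = 1 - F a :=
        ENNReal.toReal_ofReal (by linarith [hFle1 a (le_of_lt ha0)])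
      rw [htoReal]
      have hq : (1:ℝ) - (1 - g (1 - F a) / g (1 - F 0)) = g (1 - F a) / g (1 - F 0) := by ring
      rw [hq, ← ENNReal.ofReal_mul (le_of_lt h1θ0), ← ENNReal.ofReal_mul (le_of_lt h1θ)]
      congr 1
      rw [hθ]
      field_simp
      ring
  -- rewrite RHS integral by layer cake
  have hcont : ContinuousOn I (Set.Ioi (0:ℝ)) :=
    (hIlip.continuousOn).mono Set.Ioi_subset_Ici_self
  have hmble : AEMeasurable I (Fhat.measure.restrict (Set.Ioi (0:ℝ))) :=
    hcont.aemeasurable measurableSet_Ioi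
  have hnn : 0 ≤ᵐ[Fhat.measure.restrict (Set.Ioi (0:ℝ))] I :=
    (ae_restrict_iff' measurableSet_Ioi).2 (ae_of_all _ fun z hz => hInn z (le_of_lt hz))
  have hlayer : (∫⁻ z in Set.Ioi (0:ℝ), ENNReal.ofReal (I z) ∂Fhat.measure) =
      ∫⁻ t in Set.Ioi (0:ℝ), Fhat.measure {x : ℝ | 0 ≤ x ∧ t < I x} := by
    rw [lintegral_eq_lintegral_meas_lt _ hnn hmble]
    refine setLIntegral_congr_fun measurableSet_Ioi (fun t ht => ?_)
    simp only [Set.mem_Ioi] at ht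
    rw [Measure.restrict_apply' measurableSet_Ioi]
    congr 1
    ext z
    simp only [Set.mem_inter_iff, Set.mem_setOf_eq, Set.mem_Ioi]
    constructor
    · rintro ⟨h1, h2⟩; exact ⟨le_of_lt h2, h1⟩
    · rintro ⟨h1, h2⟩; exact ⟨h2, lt_of_lt_of_le ht (le_trans (le_of_lt h2) (hIle z h1))⟩
  constructor
  · rw [hlayer, ← lintegral_const_mul' _ _ ENNReal.ofReal_ne_top,
      ← lintegral_const_mul' _ _ ENNReal.ofReal_ne_top]
    exact setLIntegral_congr_fun measurableSet_Ioi key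
  · refine lt_of_le_of_lt ?_ hfin
    refine mul_le_mul_right ?_ _
    refine lintegral_mono_ae ?_
    exact (ae_restrict_iff' measurableSet_Ioi).2
      (ae_of_all _ fun z hz => ENNReal.ofReal_le_ofReal (hIle z (le_of_lt hz)))

end
end

section
/- Assume ∫_{(0,∞)} z dμ_F(z) < (1+θ)·∫_{(0,∞)} z dμ_F̂(z) < ∞. Then the function v : (0,∞) → ℝ is bounded, continuous, strictly increasing, and concave on (0,∞). -/
open MeasureTheory Set Filter Topology
open scoped ENNReal

noncomputable section

namespace Stmt2Aux

lemma coe_ennreal_eq_real {x : ℝ≥0∞} (h : x ≠ ⊤) :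
    (x : EReal) = ((x.toReal : ℝ) : EReal) := by
  nth_rewrite 1 [← ENNReal.ofReal_toReal h]
  rw [EReal.coe_ennreal_ofReal, max_eq_left (by exact_mod_cast ENNReal.toReal_nonneg)]

lemma adm_zero : (fun _ : ℝ => (0:ℝ)) ∈ Adm := by
  refine ⟨rfl, fun _ _ => le_rfl, fun _ _ _ _ _ => le_rfl, ?_⟩
  intro x _ y _
  simp

variable {H : ℝ → ℝ}

lemma adm_nonneg (hH : H ∈ Adm) {z : ℝ} (hz : 0 ≤ z) : 0 ≤ H z := hH.2.1 z hz

lemma adm_mono (hH : H ∈ Adm) {y z : ℝ} (hy : 0 ≤ y) (hz : 0 ≤ z) (h : y ≤ z) : H y ≤ H z :=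
  hH.2.2.1 hy hz h

lemma adm_lip (hH : H ∈ Adm) {y z : ℝ} (hy : 0 ≤ y) (hz : 0 ≤ z) : |H y - H z| ≤ |y - z| := by
  have h := hH.2.2.2.dist_le_mul y hy z hz
  simpa [Real.dist_eq] using h

lemma adm_le_id (hH : H ∈ Adm) {z : ℝ} (hz : 0 ≤ z) : H z ≤ z := by
  have h := adm_lip hH hz le_rfl
  rw [hH.1, sub_zero, sub_zero, abs_of_nonneg hz] at h
  exact (le_abs_self _).trans h

lemma adm_aemeas (hH : H ∈ Adm) (μ : Measure ℝ) : AEMeasurable H (μ.restrict (Ioi 0)) :=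
  ((hH.2.2.2.continuousOn).mono Ioi_subset_Ici_self).aemeasurable measurableSet_Ioi

lemma Jfun_eq_coe {μ1 μ2 : Measure ℝ} {θ a : ℝ} {H : ℝ → ℝ}
    (h1 : (∫⁻ z in Ioi (0:ℝ), ENNReal.ofReal (a / 2 * H z ^ 2 + H z) ∂μ1) ≠ ⊤)
    (h2 : (ENNReal.ofReal (1 + θ) * ∫⁻ z in Ioi (0:ℝ), ENNReal.ofReal (H z) ∂μ2) ≠ ⊤) :
    Jfun μ1 μ2 θ a H =
      (((∫⁻ z in Ioi (0:ℝ), ENNReal.ofReal (a / 2 * H z ^ 2 + H z) ∂μ1).toReal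
        - (ENNReal.ofReal (1 + θ) * ∫⁻ z in Ioi (0:ℝ), ENNReal.ofReal (H z) ∂μ2).toReal : ℝ)
        : EReal) := by
  rw [Jfun, coe_ennreal_eq_real h1, coe_ennreal_eq_real h2, ← EReal.coe_sub]

lemma Jfun_eq_top {μ1 μ2 : Measure ℝ} {θ a : ℝ} {H : ℝ → ℝ}
    (h1 : (∫⁻ z in Ioi (0:ℝ), ENNReal.ofReal (a / 2 * H z ^ 2 + H z) ∂μ1) = ⊤)
    (h2 : (ENNReal.ofReal (1 + θ) * ∫⁻ z in Ioi (0:ℝ), ENNReal.ofReal (H z) ∂μ2) ≠ ⊤) :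
    Jfun μ1 μ2 θ a H = ⊤ := by
  rw [Jfun, h1, coe_ennreal_eq_real h2, EReal.coe_ennreal_top, EReal.top_sub_coe]

lemma adm_aemeas_int (hH : H ∈ Adm) (μ : Measure ℝ) (a : ℝ) :
    AEMeasurable (fun z => ENNReal.ofReal (a / 2 * H z ^ 2 + H z)) (μ.restrict (Ioi 0)) := by
  have hc : Continuous fun x : ℝ => a / 2 * x ^ 2 + x := by continuity
  exact (hc.measurable.comp_aemeasurable (adm_aemeas hH μ)).ennreal_ofReal

lemma I_combo {μ : Measure ℝ} (hH : H ∈ Adm) {a b t s : ℝ} (ha : 0 ≤ a) (hb : 0 ≤ b)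
    (ht : 0 ≤ t) (hs : 0 ≤ s) (hts : t + s = 1) :
    ∫⁻ z in Ioi (0:ℝ), ENNReal.ofReal ((t * a + s * b) / 2 * H z ^ 2 + H z) ∂μ
      = ENNReal.ofReal t * ∫⁻ z in Ioi (0:ℝ), ENNReal.ofReal (a / 2 * H z ^ 2 + H z) ∂μ
        + ENNReal.ofReal s * ∫⁻ z in Ioi (0:ℝ), ENNReal.ofReal (b / 2 * H z ^ 2 + H z) ∂μ := by
  rw [← lintegral_const_mul' _ _ ENNReal.ofReal_ne_top,
    ← lintegral_const_mul' _ _ ENNReal.ofReal_ne_top,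
    ← lintegral_add_left' ((adm_aemeas_int hH μ a).const_mul _)]
  refine setLIntegral_congr_fun measurableSet_Ioi (fun z hz => ?_)
  have hz0 : (0:ℝ) < z := hz
  have hx : 0 ≤ H z := adm_nonneg hH hz0.le
  rw [← ENNReal.ofReal_mul ht, ← ENNReal.ofReal_mul hs,
    ← ENNReal.ofReal_add (by positivity) (by positivity)]
  congr 1
  have : t * (a / 2 * H z ^ 2 + H z) + s * (b / 2 * H z ^ 2 + H z)
      = (t * a + s * b) / 2 * H z ^ 2 + (t + s) * H z := by ring
  rw [this, hts, one_mul]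

lemma I_dec {μ : Measure ℝ} (hH : H ∈ Adm) {a b : ℝ} (ha : 0 ≤ a) (hab : a ≤ b) :
    ∫⁻ z in Ioi (0:ℝ), ENNReal.ofReal (b / 2 * H z ^ 2 + H z) ∂μ
      = (∫⁻ z in Ioi (0:ℝ), ENNReal.ofReal (a / 2 * H z ^ 2 + H z) ∂μ)
        + ENNReal.ofReal ((b - a) / 2) * ∫⁻ z in Ioi (0:ℝ), ENNReal.ofReal (H z ^ 2) ∂μ := by
  rw [← lintegral_const_mul' _ _ ENNReal.ofReal_ne_top,
    ← lintegral_add_left' (adm_aemeas_int hH μ a)]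
  refine setLIntegral_congr_fun measurableSet_Ioi (fun z hz => ?_)
  have hz0 : (0:ℝ) < z := hz
  have hx : 0 ≤ H z := adm_nonneg hH hz0.le
  rw [← ENNReal.ofReal_mul (by linarith), ← ENNReal.ofReal_add (by positivity)
    (by nlinarith [sq_nonneg (H z)])]
  congr 1
  ring

lemma I_lower_S {μ : Measure ℝ} (hH : H ∈ Adm) {a : ℝ} (ha : 0 ≤ a) :
    ENNReal.ofReal (a / 2) * ∫⁻ z in Ioi (0:ℝ), ENNReal.ofReal (H z ^ 2) ∂μ
      ≤ ∫⁻ z in Ioi (0:ℝ), ENNReal.ofReal (a / 2 * H z ^ 2 + H z) ∂μ := by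
  rw [← lintegral_const_mul' _ _ ENNReal.ofReal_ne_top]
  refine setLIntegral_mono' measurableSet_Ioi fun z hz => ?_
  have hz0 : (0:ℝ) < z := hz
  have hx : 0 ≤ H z := adm_nonneg hH hz0.le
  rw [← ENNReal.ofReal_mul (by linarith)]
  exact ENNReal.ofReal_le_ofReal (by nlinarith)

end Stmt2Aux

open Stmt2Aux

set_option maxHeartbeats 1000000 in
/-- v is (real-valued,) bounded, continuous, strictly increasing and
concave on (0,∞). -/
theorem stmt_2
    (F Fhat : StieltjesFunction ℝ) (g : ℝ → ℝ) (θ0 θ : ℝ)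
    (hF_neg : ∀ z : ℝ, z < 0 → F z = 0)
    (hF_top : Tendsto (fun z => F z) atTop (nhds 1))
    (hg_mono : MonotoneOn g (Set.Icc 0 1))
    (hg_left : ∀ p ∈ Set.Ioc (0:ℝ) 1, Tendsto g (nhdsWithin p (Set.Iio p)) (nhds (g p)))
    (hg_zero : g 0 = 0)
    (hg_zero' : Tendsto g (nhdsWithin 0 (Set.Ioi 0)) (nhds 0))
    (hg_one : g 1 = 1)
    (hg_pos : 0 < g (1 - F 0))
    (hθ0 : -1 < θ0)
    (hθ : θ = (1 + θ0) * g (1 - F 0) - 1)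
    (hFhat : ∀ z : ℝ, Fhat z = if z < 0 then 0 else 1 - g (1 - F z) / g (1 - F 0))
    (hFhat_top : Tendsto (fun z => Fhat z) atTop (nhds 1))
    (hmom : (∫⁻ z in Set.Ioi (0:ℝ), ENNReal.ofReal z ∂F.measure) <
        ENNReal.ofReal (1 + θ) * ∫⁻ z in Set.Ioi (0:ℝ), ENNReal.ofReal z ∂Fhat.measure)
    (hfin : ENNReal.ofReal (1 + θ) *
        (∫⁻ z in Set.Ioi (0:ℝ), ENNReal.ofReal z ∂Fhat.measure) < ⊤) :
    ∃ w : ℝ → ℝ,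
      (∀ a ∈ Set.Ioi (0:ℝ), vfun F.measure Fhat.measure θ a = (w a : EReal)) ∧
      (∃ M : ℝ, ∀ a ∈ Set.Ioi (0:ℝ), |w a| ≤ M) ∧
      ContinuousOn w (Set.Ioi 0) ∧
      StrictMonoOn w (Set.Ioi 0) ∧
      ConcaveOn ℝ (Set.Ioi 0) w := by
  classical
  have hv_def : ∀ a : ℝ, vfun F.measure Fhat.measure θ a
      = ⨅ H ∈ Adm, Jfun F.measure Fhat.measure θ a H := fun _ => rfl
  -- basic positivity
  have hθ0' : (0:ℝ) < 1 + θ0 := by linarith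
  have hθpos : (0:ℝ) < 1 + θ := by
    have := mul_pos hθ0' hg_pos; rw [hθ]; linarith
  -- basic facts about F, Fhat
  have hF_nonneg : ∀ z : ℝ, 0 ≤ F z := by
    intro z
    rcases lt_or_ge z 0 with h | h
    · exact (hF_neg z h).symm.le
    · rw [← hF_neg (-1) (by norm_num)]; exact F.mono (by linarith)
  have hF_le_one : ∀ z : ℝ, F z ≤ 1 := fun z => F.mono.ge_of_tendsto hF_top z
  have hFhat_neg : ∀ z : ℝ, z < 0 → Fhat z = 0 := fun z hz => by rw [hFhat z, if_pos hz]
  have hF_bot : Tendsto (fun z => F z) atBot (𝓝 0) :=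
    tendsto_const_nhds.congr' (((eventually_le_atBot (-1:ℝ)).mono
      (fun z hz => (hF_neg z (by linarith)).symm)))
  have hFhat_bot : Tendsto (fun z => Fhat z) atBot (𝓝 0) :=
    tendsto_const_nhds.congr' (((eventually_le_atBot (-1:ℝ)).mono
      (fun z hz => (hFhat_neg z (by linarith)).symm)))
  have hμ1univ : F.measure univ = 1 := by
    rw [F.measure_univ hF_bot hF_top]; norm_num
  have hμ2univ : Fhat.measure univ = 1 := by
    rw [Fhat.measure_univ hFhat_bot hFhat_top]; norm_num
  haveI : IsProbabilityMeasure F.measure := ⟨hμ1univ⟩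
  haveI : IsProbabilityMeasure Fhat.measure := ⟨hμ2univ⟩
  have hμ1Ioi : ∀ x : ℝ, F.measure (Ioi x) = ENNReal.ofReal (1 - F x) := by
    intro x
    have h1 : F.measure (Iic x) = ENNReal.ofReal (F x) := by
      rw [F.measure_Iic hF_bot, sub_zero]
    rw [← compl_Iic, measure_compl measurableSet_Iic (measure_ne_top _ _), hμ1univ, h1,
      ← ENNReal.ofReal_one, ← ENNReal.ofReal_sub _ (hF_nonneg x)]
  have hμ2Ioi : ∀ x : ℝ, Fhat.measure (Ioi x) = ENNReal.ofReal (1 - Fhat x) := by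
    intro x
    have h0 : 0 ≤ Fhat x := by
      rcases lt_or_ge x 0 with h | h
      · exact (hFhat_neg x h).symm.le
      · rw [← hFhat_neg (-1) (by norm_num)]; exact Fhat.mono (by linarith)
    have h1 : Fhat.measure (Iic x) = ENNReal.ofReal (Fhat x) := by
      rw [Fhat.measure_Iic hFhat_bot, sub_zero]
    rw [← compl_Iic, measure_compl measurableSet_Iic (measure_ne_top _ _), hμ2univ, h1,
      ← ENNReal.ofReal_one, ← ENNReal.ofReal_sub _ h0]
  set B := ∫⁻ z in Set.Ioi (0:ℝ), ENNReal.ofReal z ∂Fhat.measure with hB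
  set A := ∫⁻ z in Set.Ioi (0:ℝ), ENNReal.ofReal z ∂F.measure with hA
  have hθ0'' : ENNReal.ofReal (1+θ) ≠ 0 := by
    simp only [ne_eq, ENNReal.ofReal_eq_zero, not_le]; linarith
  have hBfin : B ≠ ⊤ := by
    intro h; rw [h, ENNReal.mul_top hθ0''] at hfin; exact absurd hfin (lt_irrefl _)
  have hCfin : ENNReal.ofReal (1+θ) * B ≠ ⊤ := hfin.ne
  have hAfin : A ≠ ⊤ := (hmom.trans hfin).ne
  -- second-term bounds
  have hT2le : ∀ H ∈ Adm,
      (∫⁻ z in Set.Ioi (0:ℝ), ENNReal.ofReal (H z) ∂Fhat.measure) ≤ B := by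
    intro H hH
    refine setLIntegral_mono' measurableSet_Ioi fun z hz => ?_
    have hz0 : (0:ℝ) < z := hz
    exact ENNReal.ofReal_le_ofReal (adm_le_id hH hz0.le)
  have hYfin : ∀ H ∈ Adm,
      ENNReal.ofReal (1+θ) * (∫⁻ z in Set.Ioi (0:ℝ), ENNReal.ofReal (H z) ∂Fhat.measure) ≠ ⊤ :=
    fun H hH => ne_top_of_le_ne_top hCfin (mul_le_mul_right (hT2le H hH) _)
  set Creal : ℝ := (ENNReal.ofReal (1+θ) * B).toReal with hCreal
  have hJge : ∀ (a : ℝ) (H : ℝ → ℝ), H ∈ Adm →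
      (((-Creal : ℝ) : EReal)) ≤ Jfun F.measure Fhat.measure θ a H := by
    intro a H hH
    rw [Jfun]
    have h2 := hYfin H hH
    have hstep : ((-Creal : ℝ) : EReal) = (0 : EReal) - ((Creal:ℝ) : EReal) := by
      rw [show (0:EReal) = ((0:ℝ):EReal) from rfl, ← EReal.coe_sub]; norm_num
    rw [hstep]
    refine EReal.sub_le_sub (EReal.coe_ennreal_nonneg _) ?_
    rw [coe_ennreal_eq_real h2]
    exact EReal.coe_le_coe_iff.mpr
      (ENNReal.toReal_mono hCfin (mul_le_mul_right (hT2le H hH) _))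
  have hJzero : ∀ a : ℝ, Jfun F.measure Fhat.measure θ a (fun _ => (0:ℝ)) = 0 := by
    intro a
    rw [Jfun]
    norm_num
  have hvle : ∀ a : ℝ, vfun F.measure Fhat.measure θ a ≤ 0 := by
    intro a
    rw [hv_def a]
    exact le_trans (iInf₂_le _ adm_zero) (hJzero a).le
  have hvge : ∀ a : ℝ, (((-Creal : ℝ)) : EReal) ≤ vfun F.measure Fhat.measure θ a := by
    intro a; rw [hv_def a]; exact le_iInf₂ fun H hH => hJge a H hH
  have hvnetop : ∀ a : ℝ, vfun F.measure Fhat.measure θ a ≠ ⊤ :=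
    fun a => ((hvle a).trans_lt (by norm_num)).ne
  have hvnebot : ∀ a : ℝ, vfun F.measure Fhat.measure θ a ≠ ⊥ :=
    fun a => ((EReal.bot_lt_coe _).trans_le (hvge a)).ne'
  set w : ℝ → ℝ := fun a => (vfun F.measure Fhat.measure θ a).toReal with hwdef
  have hveq : ∀ a : ℝ, vfun F.measure Fhat.measure θ a = ((w a : ℝ) : EReal) :=
    fun a => (EReal.coe_toReal (hvnetop a) (hvnebot a)).symm
  have hwle : ∀ a : ℝ, w a ≤ 0 := by
    intro a
    have := hvle a
    rw [hveq a, show (0:EReal) = ((0:ℝ):EReal) from rfl, EReal.coe_le_coe_iff] at this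
    exact this
  have hwge : ∀ a : ℝ, -Creal ≤ w a := by
    intro a
    have := hvge a
    rw [hveq a, EReal.coe_le_coe_iff] at this
    exact this
  -- negativity of v on (0,∞)
  have hvneg : ∀ b : ℝ, 0 < b → vfun F.measure Fhat.measure θ b < 0 := by
    intro b hb
    have hQmeas : ∀ c : ℝ, Measurable fun z : ℝ => ENNReal.ofReal (min z c) :=
      fun c => ((continuous_id.min continuous_const).measurable).ennreal_ofReal
    have hQsup : (⨆ n : ℕ, ∫⁻ z in Set.Ioi (0:ℝ),
        ENNReal.ofReal (min z (n:ℝ)) ∂Fhat.measure) = B := by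
      rw [hB, ← lintegral_iSup (fun n => hQmeas (n:ℝ))
        (fun m n hmn z => ENNReal.ofReal_le_ofReal (min_le_min le_rfl (by exact_mod_cast hmn)))]
      refine setLIntegral_congr_fun measurableSet_Ioi (fun z hz => ?_)
      refine le_antisymm (iSup_le fun n => ENNReal.ofReal_le_ofReal (min_le_left _ _)) ?_
      obtain ⟨n, hn⟩ := exists_nat_ge z
      exact le_iSup_of_le n (congrArg ENNReal.ofReal (min_eq_left hn).symm).le
    have hex : ∃ n : ℕ, A < ENNReal.ofReal (1+θ)
        * ∫⁻ z in Set.Ioi (0:ℝ), ENNReal.ofReal (min z (n:ℝ)) ∂Fhat.measure := by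
      have h0 : A < ⨆ n : ℕ, ENNReal.ofReal (1+θ)
          * ∫⁻ z in Set.Ioi (0:ℝ), ENNReal.ofReal (min z (n:ℝ)) ∂Fhat.measure := by
        rw [← ENNReal.mul_iSup, hQsup]; exact hmom
      exact lt_iSup_iff.mp h0
    obtain ⟨n, hn⟩ := hex
    obtain ⟨Nr, hNrd⟩ : ∃ x : ℝ, x = (n:ℝ) + 1 := ⟨_, rfl⟩
    have hNr1 : 1 ≤ Nr := by
      rw [hNrd]; have : (0:ℝ) ≤ (n:ℝ) := Nat.cast_nonneg n; linarith
    have hNrpos : (0:ℝ) < Nr := by linarith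
    obtain ⟨QN, hQNd⟩ : ∃ x : ℝ≥0∞,
      x = ∫⁻ z in Set.Ioi (0:ℝ), ENNReal.ofReal (min z Nr) ∂Fhat.measure := ⟨_, rfl⟩
    have hmono2 : (∫⁻ z in Set.Ioi (0:ℝ), ENNReal.ofReal (min z ((n:ℕ):ℝ)) ∂Fhat.measure)
        ≤ QN := by
      rw [hQNd]
      refine setLIntegral_mono' measurableSet_Ioi fun z hz => ?_
      exact ENNReal.ofReal_le_ofReal (min_le_min le_rfl (by rw [hNrd]; linarith))
    have hAQ : A < ENNReal.ofReal (1+θ) * QN := lt_of_lt_of_le hn (mul_le_mul_right hmono2 _)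
    have hQle : QN ≤ B := by
      rw [hQNd, hB]
      exact setLIntegral_mono' measurableSet_Ioi fun z hz =>
        ENNReal.ofReal_le_ofReal (min_le_left _ _)
    have hQfin : QN ≠ ⊤ := ne_top_of_le_ne_top hBfin hQle
    have hDfin : ENNReal.ofReal (1+θ) * QN ≠ ⊤ :=
      ENNReal.mul_ne_top ENNReal.ofReal_ne_top hQfin
    obtain ⟨D, hDd⟩ : ∃ x : ℝ, x = (ENNReal.ofReal (1+θ) * QN).toReal := ⟨_, rfl⟩
    obtain ⟨A', hA'd⟩ : ∃ x : ℝ, x = A.toReal := ⟨_, rfl⟩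
    have hAD : A' < D := by
      rw [hDd, hA'd]; exact (ENNReal.toReal_lt_toReal hAfin hDfin).mpr hAQ
    obtain ⟨ε, hεd⟩ : ∃ x : ℝ, x = min 1 ((D - A') / (b * Nr^2 + 1)) := ⟨_, rfl⟩
    have hεpos : 0 < ε := by
      rw [hεd]; exact lt_min one_pos (div_pos (by linarith) (by positivity))
    have hεle1 : ε ≤ 1 := by rw [hεd]; exact min_le_left _ _
    have hkeyineq : b * ε^2 * Nr^2 / 2 + ε * A' < ε * D := by
      have h1 : ε ≤ (D - A') / (b * Nr^2 + 1) := by rw [hεd]; exact min_le_right _ _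
      have h2 : ε * (b * Nr^2 + 1) ≤ D - A' := by
        rw [← le_div_iff₀ (by positivity)]; exact h1
      have h4 : ε * (ε * (b * Nr^2 + 1)) ≤ ε * (D - A') :=
        mul_le_mul_of_nonneg_left h2 hεpos.le
      nlinarith [h4, mul_pos hεpos hεpos,
        mul_nonneg (mul_nonneg (mul_nonneg hεpos.le hεpos.le) hb.le) (sq_nonneg Nr)]
    obtain ⟨Hb, hHbd⟩ : ∃ x : ℝ → ℝ, x = fun z => ε * min z Nr := ⟨_, rfl⟩
    have hHbAdm : Hb ∈ Adm := by
      refine ⟨?_, ?_, ?_, ?_⟩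
      · show Hb 0 = 0
        rw [hHbd]
        show ε * min (0:ℝ) Nr = 0
        rw [min_eq_left (by linarith)]; ring
      · intro z hz
        rw [hHbd]
        exact mul_nonneg hεpos.le (le_min hz (by linarith))
      · intro x _ y _ hxy
        rw [hHbd]
        exact mul_le_mul_of_nonneg_left (min_le_min hxy le_rfl) hεpos.le
      · refine LipschitzOnWith.of_dist_le_mul fun x _ y _ => ?_
        have hl := LipschitzWith.dist_le_mul (LipschitzWith.id.min_const Nr) x y
        simp only [Real.dist_eq, NNReal.coe_one, one_mul, id] at hl ⊢
        have heq : |Hb x - Hb y| = ε * |min x Nr - min y Nr| := by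
          rw [hHbd]; dsimp only; rw [← mul_sub, abs_mul, abs_of_pos hεpos]
        rw [heq]
        calc ε * |min x Nr - min y Nr| ≤ ε * |x - y| :=
              mul_le_mul_of_nonneg_left hl hεpos.le
          _ ≤ 1 * |x - y| := mul_le_mul_of_nonneg_right hεle1 (abs_nonneg _)
          _ = |x - y| := one_mul _
    have hT2Hb : (∫⁻ z in Set.Ioi (0:ℝ), ENNReal.ofReal (Hb z) ∂Fhat.measure)
        = ENNReal.ofReal ε * QN := by
      rw [hQNd, ← lintegral_const_mul' _ _ ENNReal.ofReal_ne_top]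
      refine setLIntegral_congr_fun measurableSet_Ioi (fun z hz => ?_)
      rw [hHbd]; dsimp only; rw [ENNReal.ofReal_mul hεpos.le]
    have hIHb : (∫⁻ z in Set.Ioi (0:ℝ), ENNReal.ofReal (b / 2 * Hb z ^ 2 + Hb z) ∂F.measure)
        ≤ ENNReal.ofReal (b * ε^2 * Nr^2 / 2) + ENNReal.ofReal ε * A := by
      have hstep : (∫⁻ z in Set.Ioi (0:ℝ),
            ENNReal.ofReal (b / 2 * Hb z ^ 2 + Hb z) ∂F.measure)
          ≤ ∫⁻ z in Set.Ioi (0:ℝ), (ENNReal.ofReal (b * ε^2 * Nr^2 / 2)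
              + ENNReal.ofReal ε * ENNReal.ofReal z) ∂F.measure := by
        refine setLIntegral_mono' measurableSet_Ioi fun z hz => ?_
        have hz0 : (0:ℝ) < z := hz
        have h6 : min z Nr ≤ Nr := min_le_right _ _
        have h7 : 0 ≤ min z Nr := le_min hz0.le (by linarith)
        have h8 : min z Nr ≤ z := min_le_left _ _
        have h9 : (min z Nr)^2 ≤ Nr^2 := by nlinarith
        rw [hHbd]; dsimp only
        calc ENNReal.ofReal (b / 2 * (ε * min z Nr) ^ 2 + ε * min z Nr)
            ≤ ENNReal.ofReal (b * ε^2 * Nr^2 / 2 + ε * z) :=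
              ENNReal.ofReal_le_ofReal (by nlinarith [mul_le_mul_of_nonneg_left h9 (mul_nonneg (by linarith : (0:ℝ) ≤ b/2) (sq_nonneg ε)), mul_le_mul_of_nonneg_left h8 hεpos.le])
          _ = ENNReal.ofReal (b * ε^2 * Nr^2 / 2) + ENNReal.ofReal (ε * z) :=
              ENNReal.ofReal_add (by positivity) (by positivity)
          _ = ENNReal.ofReal (b * ε^2 * Nr^2 / 2) + ENNReal.ofReal ε * ENNReal.ofReal z := by
              rw [ENNReal.ofReal_mul hεpos.le]
      refine hstep.trans ?_
      rw [lintegral_add_left measurable_const, lintegral_const,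
        Measure.restrict_apply_univ, lintegral_const_mul' _ _ ENNReal.ofReal_ne_top, ← hA]
      exact add_le_add ((mul_le_mul_right prob_le_one _).trans_eq (mul_one _)) le_rfl
    have hcomp : ENNReal.ofReal (b * ε^2 * Nr^2 / 2) + ENNReal.ofReal ε * A
        < ENNReal.ofReal ε * (ENNReal.ofReal (1+θ) * QN) := by
      have hL : ENNReal.ofReal (b * ε^2 * Nr^2 / 2) + ENNReal.ofReal ε * A ≠ ⊤ :=
        ENNReal.add_ne_top.mpr ⟨ENNReal.ofReal_ne_top,
          ENNReal.mul_ne_top ENNReal.ofReal_ne_top hAfin⟩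
      have hR : ENNReal.ofReal ε * (ENNReal.ofReal (1+θ) * QN) ≠ ⊤ :=
        ENNReal.mul_ne_top ENNReal.ofReal_ne_top hDfin
      rw [← ENNReal.toReal_lt_toReal hL hR,
        ENNReal.toReal_add ENNReal.ofReal_ne_top
          (ENNReal.mul_ne_top ENNReal.ofReal_ne_top hAfin),
        ENNReal.toReal_mul, ENNReal.toReal_mul, ENNReal.toReal_ofReal (by positivity),
        ENNReal.toReal_ofReal hεpos.le, ← hA'd, ← hDd]
      exact hkeyineq
    have hYne := hYfin Hb hHbAdm
    have hIlt : (∫⁻ z in Set.Ioi (0:ℝ), ENNReal.ofReal (b / 2 * Hb z ^ 2 + Hb z) ∂F.measure)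
        < ENNReal.ofReal (1+θ)
          * ∫⁻ z in Set.Ioi (0:ℝ), ENNReal.ofReal (Hb z) ∂Fhat.measure := by
      rw [hT2Hb]
      calc (∫⁻ z in Set.Ioi (0:ℝ), ENNReal.ofReal (b / 2 * Hb z ^ 2 + Hb z) ∂F.measure)
          ≤ ENNReal.ofReal (b * ε^2 * Nr^2 / 2) + ENNReal.ofReal ε * A := hIHb
        _ < ENNReal.ofReal ε * (ENNReal.ofReal (1+θ) * QN) := hcomp
        _ = ENNReal.ofReal (1+θ) * (ENNReal.ofReal ε * QN) := by ring
    have hIne : (∫⁻ z in Set.Ioi (0:ℝ),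
        ENNReal.ofReal (b / 2 * Hb z ^ 2 + Hb z) ∂F.measure) ≠ ⊤ :=
      (hIlt.trans (lt_top_iff_ne_top.mpr hYne)).ne
    have hJneg : Jfun F.measure Fhat.measure θ b Hb < 0 := by
      rw [Jfun_eq_coe hIne hYne]
      have hr : ((∫⁻ z in Set.Ioi (0:ℝ),
            ENNReal.ofReal (b / 2 * Hb z ^ 2 + Hb z) ∂F.measure).toReal
          - (ENNReal.ofReal (1+θ)
            * ∫⁻ z in Set.Ioi (0:ℝ), ENNReal.ofReal (Hb z) ∂Fhat.measure).toReal : ℝ) < 0 :=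
        sub_neg.mpr ((ENNReal.toReal_lt_toReal hIne hYne).mpr hIlt)
      exact_mod_cast hr
    calc vfun F.measure Fhat.measure θ b ≤ Jfun F.measure Fhat.measure θ b Hb := by
          rw [hv_def]; exact iInf₂_le Hb hHbAdm
      _ < 0 := hJneg
  -- key lemma
  have hkey : ∀ ε : ℝ, 0 < ε → ∃ δ : ℝ, 0 < δ ∧ ∀ H ∈ Adm,
      (∫⁻ z in Set.Ioi (0:ℝ), ENNReal.ofReal (H z ^ 2) ∂F.measure) ≤ ENNReal.ofReal δ →
      ENNReal.ofReal (1+θ) * (∫⁻ z in Set.Ioi (0:ℝ), ENNReal.ofReal (H z) ∂Fhat.measure)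
        ≤ ENNReal.ofReal ε := by
    have hF0lt : F 0 < 1 := by
      by_contra h
      push_neg at h
      have h1 : F 0 = 1 := le_antisymm (hF_le_one 0) h
      rw [h1, sub_self, hg_zero] at hg_pos
      exact lt_irrefl 0 hg_pos
    have hIoc : ∀ (T T' : ℝ), 0 < T → T ≤ T' → ∀ H ∈ Adm,
        (∫⁻ z in Set.Ioc (0:ℝ) T, ENNReal.ofReal (H z) ∂Fhat.measure)
          ≤ ENNReal.ofReal (H T') := by
      intro T T' hT hTT' H hH
      calc (∫⁻ z in Set.Ioc (0:ℝ) T, ENNReal.ofReal (H z) ∂Fhat.measure)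
          ≤ ∫⁻ _ in Set.Ioc (0:ℝ) T, ENNReal.ofReal (H T') ∂Fhat.measure := by
            refine setLIntegral_mono' measurableSet_Ioc fun z hz => ?_
            exact ENNReal.ofReal_le_ofReal
              (adm_mono hH hz.1.le (by linarith) (hz.2.trans hTT'))
        _ = ENNReal.ofReal (H T') * Fhat.measure (Set.Ioc 0 T) := setLIntegral_const _ _
        _ ≤ ENNReal.ofReal (H T') * 1 := mul_le_mul_right prob_le_one _
        _ = ENNReal.ofReal (H T') := mul_one _
    have hsplit : ∀ (T : ℝ), 0 < T → ∀ (H : ℝ → ℝ),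
        (∫⁻ z in Set.Ioi (0:ℝ), ENNReal.ofReal (H z) ∂Fhat.measure)
          = (∫⁻ z in Set.Ioc (0:ℝ) T, ENNReal.ofReal (H z) ∂Fhat.measure)
            + (∫⁻ z in Set.Ioi T, ENNReal.ofReal (H z) ∂Fhat.measure) := by
      intro T hT H
      rw [← Set.Ioc_union_Ioi_eq_Ioi hT.le,
        lintegral_union measurableSet_Ioi Set.Ioc_disjoint_Ioi_same]
    have hclaim : ∀ ε : ℝ, 0 < ε → ∃ T : ℝ, 0 < T ∧ F T < 1 ∧ ∀ H ∈ Adm,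
        ENNReal.ofReal (1+θ) * (∫⁻ z in Set.Ioi (0:ℝ), ENNReal.ofReal (H z) ∂Fhat.measure)
          ≤ ENNReal.ofReal (1+θ) * ENNReal.ofReal (H T) + ENNReal.ofReal (ε/2) := by
      intro ε hε
      by_cases hcase : ∃ z : ℝ, F z = 1
      · -- bounded support case
        obtain ⟨z0, hz0⟩ := hcase
        set Sset := {z : ℝ | F z = 1} with hSset
        have hz0m : z0 ∈ Sset := hz0
        have hSlb : ∀ z ∈ Sset, (0:ℝ) ≤ z := by
          intro z hz
          by_contra h
          push_neg at h
          have : F z = 1 := hz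
          rw [hF_neg z h] at this
          exact one_ne_zero this.symm
        have hbdd : BddBelow Sset := ⟨0, hSlb⟩
        set T0 := sInf Sset with hT0
        have hT0nn : 0 ≤ T0 := le_csInf ⟨z0, hz0m⟩ hSlb
        have htop : ∀ z : ℝ, T0 < z → F z = 1 := by
          intro z hz
          obtain ⟨m, hm, hmz⟩ := exists_lt_of_csInf_lt ⟨z0, hz0m⟩ hz
          have hm1 : F m = 1 := hm
          exact le_antisymm (hF_le_one z) (hm1 ▸ F.mono hmz.le)
        have hconst : ∀ (G : StieltjesFunction ℝ) (x : ℝ), (∀ z, x < z → G z = 1) → G x = 1 := by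
          intro G x hx
          have h1 : Tendsto (⇑G) (𝓝[>] x) (𝓝 (G x)) :=
            (G.right_continuous x).mono_left (nhdsWithin_mono x Ioi_subset_Ici_self)
          have h2 : Tendsto (⇑G) (𝓝[>] x) (𝓝 1) :=
            tendsto_const_nhds.congr'
              (eventually_nhdsWithin_of_forall fun z hz => (hx z hz).symm)
          exact tendsto_nhds_unique h1 h2
        have hT0pos : 0 < T0 := by
          rcases hT0nn.lt_or_eq with h | h
          · exact h
          · exfalso
            have : F 0 = 1 := hconst F 0 (fun z hz => htop z (h ▸ hz))
            linarith
        have hFhat_one : ∀ z : ℝ, T0 < z → Fhat z = 1 := by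
          intro z hz
          rw [hFhat z, if_neg (not_lt.mpr (hT0nn.trans hz.le)), htop z hz]
          simp [hg_zero]
        have hFhatT0 : Fhat T0 = 1 := hconst Fhat T0 hFhat_one
        have hmuzero : Fhat.measure (Set.Ioi T0) = 0 := by
          rw [hμ2Ioi, hFhatT0, sub_self, ENNReal.ofReal_zero]
        set e := min (ε / (2 * (1+θ))) (T0 / 2) with he
        have hepos : 0 < e := lt_min (by positivity) (by positivity)
        have heT0 : e ≤ T0 / 2 := min_le_right _ _
        set T := T0 - e with hT
        have hTpos : 0 < T := by rw [hT]; linarith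
        have hTlt : T < T0 := by rw [hT]; linarith
        have hFT : F T < 1 := by
          refine lt_of_le_of_ne (hF_le_one T) fun h => ?_
          exact absurd (csInf_le hbdd (h : T ∈ Sset)) (not_le.mpr hTlt)
        refine ⟨T, hTpos, hFT, ?_⟩
        intro H hH
        have h1 : (∫⁻ z in Set.Ioi (0:ℝ), ENNReal.ofReal (H z) ∂Fhat.measure)
            ≤ ENNReal.ofReal (H T + e) := by
          rw [hsplit T0 hT0pos H, setLIntegral_measure_zero _ _ hmuzero, add_zero]
          refine (hIoc T0 T0 hT0pos le_rfl H hH).trans (ENNReal.ofReal_le_ofReal ?_)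
          have h3 := adm_lip hH hT0nn hTpos.le
          have h4 : |T0 - T| = e := by
            rw [hT, abs_of_nonneg (by linarith)]; ring
          rw [h4] at h3
          have := (le_abs_self (H T0 - H T)).trans h3
          linarith
        calc ENNReal.ofReal (1+θ) * (∫⁻ z in Set.Ioi (0:ℝ), ENNReal.ofReal (H z) ∂Fhat.measure)
            ≤ ENNReal.ofReal (1+θ) * ENNReal.ofReal (H T + e) := mul_le_mul_right h1 _
          _ = ENNReal.ofReal (1+θ) * ENNReal.ofReal (H T)
              + ENNReal.ofReal (1+θ) * ENNReal.ofReal e := by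
            rw [ENNReal.ofReal_add (adm_nonneg hH hTpos.le) hepos.le, mul_add]
          _ ≤ ENNReal.ofReal (1+θ) * ENNReal.ofReal (H T) + ENNReal.ofReal (ε/2) := by
            refine add_le_add_right ?_ _
            rw [← ENNReal.ofReal_mul hθpos.le]
            refine ENNReal.ofReal_le_ofReal ?_
            have h5 : e ≤ ε / (2 * (1+θ)) := min_le_left _ _
            calc (1+θ) * e ≤ (1+θ) * (ε / (2*(1+θ))) := mul_le_mul_of_nonneg_left h5 hθpos.le
              _ = ε / 2 := by field_simp
      · -- unbounded support case
        push_neg at hcase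
        have hFlt : ∀ z : ℝ, F z < 1 := fun z => lt_of_le_of_ne (hF_le_one z) (hcase z)
        set ρ := Fhat.measure.withDensity (fun z => ENNReal.ofReal z) with hρ
        have hρap : ∀ s : Set ℝ, MeasurableSet s →
            ρ s = ∫⁻ z in s, ENNReal.ofReal z ∂Fhat.measure :=
          fun s hs => withDensity_apply _ hs
        have h1 : Tendsto (fun n : ℕ => ρ (Set.Ioi (n:ℝ))) atTop
            (𝓝 (ρ (⋂ n : ℕ, Set.Ioi (n:ℝ)))) := by
          refine tendsto_measure_iInter_atTop (fun n => measurableSet_Ioi.nullMeasurableSet)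
            (fun m n hmn => Ioi_subset_Ioi (by exact_mod_cast hmn)) ⟨0, ?_⟩
          rw [hρap _ measurableSet_Ioi]
          simpa using hBfin
        have hInter : (⋂ n : ℕ, Set.Ioi ((n:ℕ):ℝ)) = (∅ : Set ℝ) := by
          apply Set.eq_empty_iff_forall_notMem.mpr
          intro x hx
          obtain ⟨n, hn⟩ := exists_nat_gt x
          exact absurd (Set.mem_iInter.mp hx n) (by simpa using hn.le)
        rw [hInter, measure_empty] at h1
        have h2 : Tendsto (fun n : ℕ => ENNReal.ofReal (1+θ) * ρ (Set.Ioi (n:ℝ)))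
            atTop (𝓝 0) := by
          have h2' := ENNReal.Tendsto.const_mul (a := ENNReal.ofReal (1+θ)) h1
            (Or.inr ENNReal.ofReal_ne_top)
          simpa using h2'
        have h3 : ∀ᶠ n : ℕ in atTop,
            ENNReal.ofReal (1+θ) * ρ (Set.Ioi (n:ℝ)) < ENNReal.ofReal (ε/2) :=
          h2.eventually_lt_const (ENNReal.ofReal_pos.mpr (by linarith))
        obtain ⟨n, hn1, hn2⟩ := ((eventually_ge_atTop 1).and h3).exists
        have hnpos : (0:ℝ) < n := by exact_mod_cast hn1
        refine ⟨(n:ℝ), hnpos, hFlt _, ?_⟩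
        intro H hH
        have e2 : (∫⁻ z in Set.Ioi ((n:ℕ):ℝ), ENNReal.ofReal (H z) ∂Fhat.measure)
            ≤ ρ (Set.Ioi (n:ℝ)) := by
          rw [hρap _ measurableSet_Ioi]
          refine setLIntegral_mono' measurableSet_Ioi fun z hz => ?_
          have hz' : (n:ℝ) < z := hz
          exact ENNReal.ofReal_le_ofReal (adm_le_id hH (by linarith))
        rw [hsplit (n:ℝ) hnpos H, mul_add]
        exact add_le_add (mul_le_mul_right (hIoc (n:ℝ) (n:ℝ) hnpos le_rfl H hH) _)
          ((mul_le_mul_right e2 _).trans hn2.le)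
    -- derive key lemma from the claim
    intro ε hε
    obtain ⟨T, hT, hFT, hcl⟩ := hclaim ε hε
    set η := ε / (2 * (1+θ)) with hη
    have hηpos : 0 < η := by positivity
    have hFTpos : 0 < 1 - F T := by linarith
    refine ⟨η^2 * (1 - F T), by positivity, ?_⟩
    intro H hH hSle
    have hHT : H T ≤ η := by
      by_contra hc
      push_neg at hc
      have hHTnn : 0 ≤ H T := adm_nonneg hH hT.le
      have hlow : ENNReal.ofReal (H T^2 * (1 - F T))
          ≤ ∫⁻ z in Set.Ioi (0:ℝ), ENNReal.ofReal (H z ^ 2) ∂F.measure := by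
        calc ENNReal.ofReal (H T^2 * (1 - F T))
            = ENNReal.ofReal (H T^2) * F.measure (Set.Ioi T) := by
              rw [hμ1Ioi, ← ENNReal.ofReal_mul (by positivity)]
          _ = ∫⁻ _ in Set.Ioi T, ENNReal.ofReal (H T^2) ∂F.measure :=
              (setLIntegral_const _ _).symm
          _ ≤ ∫⁻ z in Set.Ioi T, ENNReal.ofReal (H z ^ 2) ∂F.measure := by
              refine setLIntegral_mono' measurableSet_Ioi fun z hz => ?_
              have hz' : T < z := hz
              have hm := adm_mono hH hT.le (by linarith : (0:ℝ) ≤ z) hz'.le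
              exact ENNReal.ofReal_le_ofReal (by nlinarith)
          _ ≤ ∫⁻ z in Set.Ioi (0:ℝ), ENNReal.ofReal (H z ^ 2) ∂F.measure :=
              lintegral_mono_set (Ioi_subset_Ioi hT.le)
      have hHTpos : 0 < H T := lt_trans hηpos hc
      have hsq : η^2 < H T^2 := by nlinarith
      have hlt : ENNReal.ofReal (η^2 * (1 - F T)) < ENNReal.ofReal (H T^2 * (1 - F T)) :=
        (ENNReal.ofReal_lt_ofReal_iff (mul_pos (pow_pos hHTpos 2) hFTpos)).mpr
          (mul_lt_mul_of_pos_right hsq hFTpos)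
      exact absurd hSle (not_le.mpr (lt_of_lt_of_le hlt hlow))
    calc ENNReal.ofReal (1+θ) * (∫⁻ z in Set.Ioi (0:ℝ), ENNReal.ofReal (H z) ∂Fhat.measure)
        ≤ ENNReal.ofReal (1+θ) * ENNReal.ofReal (H T) + ENNReal.ofReal (ε/2) := hcl H hH
      _ ≤ ENNReal.ofReal (1+θ) * ENNReal.ofReal η + ENNReal.ofReal (ε/2) :=
          add_le_add_left (mul_le_mul_right (ENNReal.ofReal_le_ofReal hHT) _) _
      _ = ENNReal.ofReal (ε/2) + ENNReal.ofReal (ε/2) := by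
          rw [← ENNReal.ofReal_mul hθpos.le]
          congr 1
          rw [hη]; field_simp
      _ = ENNReal.ofReal ε := by
          rw [← ENNReal.ofReal_add (by linarith) (by linarith)]
          norm_num
  -- concavity
  have hconc : ConcaveOn ℝ (Set.Ioi 0) w := by
    refine ⟨convex_Ioi 0, ?_⟩
    intro a ha b hb t s ht hs hts
    simp only [smul_eq_mul]
    rcases eq_or_lt_of_le ht with h0 | htpos
    · have hs1 : s = 1 := by linarith
      rw [← h0, hs1]; norm_num
    rcases eq_or_lt_of_le hs with h0 | hspos
    · have ht1 : t = 1 := by linarith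
      rw [← h0, ht1]; norm_num
    have ha0 : (0:ℝ) < a := ha
    have hb0 : (0:ℝ) < b := hb
    have hkey2 : ((t * w a + s * w b : ℝ) : EReal)
        ≤ vfun F.measure Fhat.measure θ (t * a + s * b) := by
      rw [hv_def]
      refine le_iInf₂ fun H hH => ?_
      have hYne := hYfin H hH
      set Ia := ∫⁻ z in Set.Ioi (0:ℝ), ENNReal.ofReal (a / 2 * H z ^ 2 + H z) ∂F.measure with hIa
      set Ib := ∫⁻ z in Set.Ioi (0:ℝ), ENNReal.ofReal (b / 2 * H z ^ 2 + H z) ∂F.measure with hIb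
      set Yv := ENNReal.ofReal (1+θ)
          * ∫⁻ z in Set.Ioi (0:ℝ), ENNReal.ofReal (H z) ∂Fhat.measure with hYv
      have hcombo := I_combo (μ := F.measure) hH ha0.le hb0.le ht hs hts
      by_cases hia : Ia = ⊤
      · have htopc : (∫⁻ z in Set.Ioi (0:ℝ),
            ENNReal.ofReal ((t * a + s * b) / 2 * H z ^ 2 + H z) ∂F.measure) = ⊤ := by
          rw [hcombo, ← hIa, hia, ENNReal.mul_top
            (by simp only [ne_eq, ENNReal.ofReal_eq_zero, not_le]; linarith), top_add]
        rw [Jfun_eq_top htopc hYne]; exact le_top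
      by_cases hib : Ib = ⊤
      · have htopc : (∫⁻ z in Set.Ioi (0:ℝ),
            ENNReal.ofReal ((t * a + s * b) / 2 * H z ^ 2 + H z) ∂F.measure) = ⊤ := by
          rw [hcombo, ← hIb, hib, ENNReal.mul_top
            (by simp only [ne_eq, ENNReal.ofReal_eq_zero, not_le]; linarith), add_top]
        rw [Jfun_eq_top htopc hYne]; exact le_top
      have hic : (∫⁻ z in Set.Ioi (0:ℝ),
          ENNReal.ofReal ((t * a + s * b) / 2 * H z ^ 2 + H z) ∂F.measure) ≠ ⊤ := by
        rw [hcombo, ← hIa, ← hIb]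
        exact ENNReal.add_ne_top.mpr ⟨ENNReal.mul_ne_top ENNReal.ofReal_ne_top hia,
          ENNReal.mul_ne_top ENNReal.ofReal_ne_top hib⟩
      rw [Jfun_eq_coe hic hYne, EReal.coe_le_coe_iff]
      have h1 : ((w a : ℝ) : EReal) ≤ Jfun F.measure Fhat.measure θ a H := by
        rw [← hveq a, hv_def a]; exact iInf₂_le H hH
      have h2 : ((w b : ℝ) : EReal) ≤ Jfun F.measure Fhat.measure θ b H := by
        rw [← hveq b, hv_def b]; exact iInf₂_le H hH
      rw [Jfun_eq_coe hia hYne, EReal.coe_le_coe_iff] at h1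
      rw [Jfun_eq_coe hib hYne, EReal.coe_le_coe_iff] at h2
      have htor : (∫⁻ z in Set.Ioi (0:ℝ),
          ENNReal.ofReal ((t * a + s * b) / 2 * H z ^ 2 + H z) ∂F.measure).toReal
          = t * Ia.toReal + s * Ib.toReal := by
        rw [hcombo, ← hIa, ← hIb, ENNReal.toReal_add (ENNReal.mul_ne_top ENNReal.ofReal_ne_top hia)
          (ENNReal.mul_ne_top ENNReal.ofReal_ne_top hib), ENNReal.toReal_mul, ENNReal.toReal_mul,
          ENNReal.toReal_ofReal ht, ENNReal.toReal_ofReal hs]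
      rw [htor]
      have e1 := mul_le_mul_of_nonneg_left h1 ht
      have e2 := mul_le_mul_of_nonneg_left h2 hs
      rw [mul_sub] at e1 e2
      have e3 : t * Yv.toReal + s * Yv.toReal = Yv.toReal := by
        rw [← add_mul, hts, one_mul]
      linarith
    rw [hveq (t * a + s * b)] at hkey2
    exact EReal.coe_le_coe_iff.mp hkey2
  -- strict monotonicity
  have hsmono : StrictMonoOn w (Set.Ioi 0) := by
    intro a ha b hb hab
    have ha0 : (0:ℝ) < a := ha
    have hb0 : (0:ℝ) < b := hb
    have hba : (0:ℝ) < b - a := by linarith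
    have hvb : vfun F.measure Fhat.measure θ b < 0 := hvneg b hb0
    have hwb : w b < 0 := by
      rw [hveq b] at hvb
      exact_mod_cast hvb
    obtain ⟨ε, hεd⟩ : ∃ x : ℝ, x = -(w b) / 2 := ⟨_, rfl⟩
    have hεpos : 0 < ε := by rw [hεd]; linarith
    obtain ⟨δ, hδ, hkeyδ⟩ := hkey (ε/2) (by linarith)
    obtain ⟨κ, hκd⟩ : ∃ x : ℝ, x = min ε ((b - a) * δ / 4) := ⟨_, rfl⟩
    have hκpos : 0 < κ := by
      rw [hκd]; exact lt_min hεpos (div_pos (mul_pos hba hδ) (by norm_num))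
    have hκε : κ ≤ ε := by rw [hκd]; exact min_le_left _ _
    have hκ2 : κ ≤ (b - a) * δ / 4 := by rw [hκd]; exact min_le_right _ _
    have hlt : vfun F.measure Fhat.measure θ b < ((w b + κ : ℝ) : EReal) := by
      rw [hveq b]
      exact_mod_cast (by linarith : w b < w b + κ)
    rw [hv_def b, iInf_lt_iff] at hlt
    obtain ⟨H, hlt⟩ := hlt
    rw [iInf_lt_iff] at hlt
    obtain ⟨hH, hJH⟩ := hlt
    have hYne := hYfin H hH
    have hIbne : (∫⁻ z in Set.Ioi (0:ℝ),
        ENNReal.ofReal (b / 2 * H z ^ 2 + H z) ∂F.measure) ≠ ⊤ := by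
      intro h
      rw [Jfun_eq_top h hYne] at hJH
      exact absurd hJH not_top_lt
    have hJHr : (∫⁻ z in Set.Ioi (0:ℝ),
          ENNReal.ofReal (b / 2 * H z ^ 2 + H z) ∂F.measure).toReal
        - (ENNReal.ofReal (1+θ)
          * ∫⁻ z in Set.Ioi (0:ℝ), ENNReal.ofReal (H z) ∂Fhat.measure).toReal < w b + κ := by
      rw [Jfun_eq_coe hIbne hYne] at hJH
      exact_mod_cast hJH
    have hIb0 : (0:ℝ) ≤ (∫⁻ z in Set.Ioi (0:ℝ),
        ENNReal.ofReal (b / 2 * H z ^ 2 + H z) ∂F.measure).toReal := ENNReal.toReal_nonneg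
    have hYge : ε ≤ (ENNReal.ofReal (1+θ)
        * ∫⁻ z in Set.Ioi (0:ℝ), ENNReal.ofReal (H z) ∂Fhat.measure).toReal := by
      linarith
    have hYgt : ENNReal.ofReal (ε/2) < ENNReal.ofReal (1+θ)
        * ∫⁻ z in Set.Ioi (0:ℝ), ENNReal.ofReal (H z) ∂Fhat.measure := by
      have h1 : ENNReal.ofReal (ε/2) < ENNReal.ofReal ε :=
        (ENNReal.ofReal_lt_ofReal_iff hεpos).mpr (by linarith)
      refine h1.trans_le ?_
      rw [← ENNReal.ofReal_toReal hYne]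
      exact ENNReal.ofReal_le_ofReal hYge
    have hSgt : ENNReal.ofReal δ
        < ∫⁻ z in Set.Ioi (0:ℝ), ENNReal.ofReal (H z ^ 2) ∂F.measure := by
      by_contra h
      push_neg at h
      exact absurd (hkeyδ H hH h) (not_le.mpr hYgt)
    have hSne : (∫⁻ z in Set.Ioi (0:ℝ), ENNReal.ofReal (H z ^ 2) ∂F.measure) ≠ ⊤ := by
      intro h
      apply hIbne
      have h7 := I_lower_S (μ := F.measure) hH hb0.le
      rw [h, ENNReal.mul_top
        (by simp only [ne_eq, ENNReal.ofReal_eq_zero, not_le]; linarith)] at h7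
      exact top_le_iff.mp h7
    have hSd : δ < (∫⁻ z in Set.Ioi (0:ℝ),
        ENNReal.ofReal (H z ^ 2) ∂F.measure).toReal := by
      have h8 := (ENNReal.toReal_lt_toReal ENNReal.ofReal_ne_top hSne).mpr hSgt
      rwa [ENNReal.toReal_ofReal hδ.le] at h8
    have hdec := I_dec (μ := F.measure) hH ha0.le hab.le
    have hIane : (∫⁻ z in Set.Ioi (0:ℝ),
        ENNReal.ofReal (a / 2 * H z ^ 2 + H z) ∂F.measure) ≠ ⊤ := by
      intro h
      exact hIbne (by rw [hdec, h, top_add])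
    have htor : (∫⁻ z in Set.Ioi (0:ℝ),
          ENNReal.ofReal (b / 2 * H z ^ 2 + H z) ∂F.measure).toReal
        = (∫⁻ z in Set.Ioi (0:ℝ),
            ENNReal.ofReal (a / 2 * H z ^ 2 + H z) ∂F.measure).toReal
          + (b - a) / 2 * (∫⁻ z in Set.Ioi (0:ℝ),
            ENNReal.ofReal (H z ^ 2) ∂F.measure).toReal := by
      rw [hdec, ENNReal.toReal_add hIane (ENNReal.mul_ne_top ENNReal.ofReal_ne_top hSne),
        ENNReal.toReal_mul, ENNReal.toReal_ofReal (by linarith)]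
    have hmul : (b - a) / 2 * δ < (b - a) / 2 * (∫⁻ z in Set.Ioi (0:ℝ),
        ENNReal.ofReal (H z ^ 2) ∂F.measure).toReal :=
      mul_lt_mul_of_pos_left hSd (by linarith)
    have hbaδ : 0 < (b - a) * δ := mul_pos hba hδ
    have hfinal : (∫⁻ z in Set.Ioi (0:ℝ),
          ENNReal.ofReal (a / 2 * H z ^ 2 + H z) ∂F.measure).toReal
        - (ENNReal.ofReal (1+θ)
          * ∫⁻ z in Set.Ioi (0:ℝ), ENNReal.ofReal (H z) ∂Fhat.measure).toReal < w b := by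
      linarith
    have hfin2 : vfun F.measure Fhat.measure θ a < vfun F.measure Fhat.measure θ b := by
      rw [hveq b]
      calc vfun F.measure Fhat.measure θ a
          ≤ Jfun F.measure Fhat.measure θ a H := by
            rw [hv_def a]; exact iInf₂_le H hH
        _ = (((∫⁻ z in Set.Ioi (0:ℝ),
              ENNReal.ofReal (a / 2 * H z ^ 2 + H z) ∂F.measure).toReal
            - (ENNReal.ofReal (1+θ)
              * ∫⁻ z in Set.Ioi (0:ℝ), ENNReal.ofReal (H z) ∂Fhat.measure).toReal : ℝ)
            : EReal) := Jfun_eq_coe hIane hYne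
        _ < ((w b : ℝ) : EReal) := by exact_mod_cast hfinal
    rw [hveq a, hveq b] at hfin2
    exact_mod_cast hfin2
  exact ⟨w, fun a _ => hveq a,
    ⟨Creal, fun a _ => abs_le.mpr ⟨hwge a, (hwle a).trans ENNReal.toReal_nonneg⟩⟩,
    hconc.continuousOn isOpen_Ioi, hsmono, hconc⟩
end
end

section
/- Assume ∫_{(0,∞)} z dμ_F(z) < (1+θ)·∫_{(0,∞)} z dμ_F̂(z) < ∞. Then the limit L := lim_{a→0+} v(a) exists and satisfies −(1+θ)·∫_{(0,∞)} z dμ_F̂(z) ≤ L ≤ ∫_{(0,∞)} z dμ_F(z) − (1+θ)·∫_{(0,∞)} z dμ_F̂(z) < 0. -/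
open MeasureTheory Set Filter Topology
open scoped ENNReal

noncomputable section

-- H z ≤ z for H ∈ Adm, z ≥ 0
lemma adm_le {H : ℝ → ℝ} (hH : H ∈ Adm) {z : ℝ} (hz : 0 ≤ z) : H z ≤ z := by
  obtain ⟨h0, hpos, hmono, hlip⟩ := hH
  have := hlip.dist_le_mul z hz 0 Set.self_mem_Ici
  rw [h0, dist_zero_right, dist_zero_right] at this
  have h1 : |H z| ≤ |z| := by simpa using this
  calc H z ≤ |H z| := le_abs_self _
    _ ≤ |z| := h1
    _ = z := abs_of_nonneg hz

lemma zero_mem_adm : (fun _ : ℝ => (0:ℝ)) ∈ Adm :=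
  ⟨rfl, fun _ _ => le_refl 0, fun _ _ _ _ _ => le_refl 0,
    by exact ((LipschitzWith.const (0:ℝ)).weaken zero_le_one).lipschitzOnWith⟩

lemma min_mem_adm (n : ℕ) : (fun z : ℝ => min z (n:ℝ)) ∈ Adm := by
  refine ⟨by simp, fun z hz => le_min hz (by positivity), ?_, ?_⟩
  · intro x _ y _ hxy; exact min_le_min hxy le_rfl
  · exact (LipschitzWith.id.min_const (n:ℝ)).lipschitzOnWith

-- ENNReal-coe subtraction as real subtraction
lemma ereal_coe_sub_coe {x y : ℝ≥0∞} (hx : x ≠ ⊤) (hy : y ≠ ⊤) :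
    ((x : EReal) - (y : EReal)) = (((x.toReal - y.toReal : ℝ)) : EReal) := by
  rw [EReal.coe_sub]
  congr 1
  · exact (EReal.coe_toReal (by simpa using hx) (EReal.coe_ennreal_ne_bot x)).symm.trans
      (by rw [EReal.toReal_coe_ennreal])
  · exact (EReal.coe_toReal (by simpa using hy) (EReal.coe_ennreal_ne_bot y)).symm.trans
      (by rw [EReal.toReal_coe_ennreal])

lemma ereal_coe_ennreal_eq {x : ℝ≥0∞} (hx : x ≠ ⊤) : (x : EReal) = ((x.toReal : ℝ) : EReal) := by
  conv_lhs => rw [← EReal.coe_toReal (by simpa [EReal.coe_ennreal_eq_top_iff] using hx)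
    (EReal.coe_ennreal_ne_bot x)]
  rw [EReal.toReal_coe_ennreal]

lemma Jfun_zero (μF μh : Measure ℝ) (θ a : ℝ) : Jfun μF μh θ a (fun _ => 0) = 0 := by
  simp [Jfun]

lemma Jfun_mono_a (μF μh : Measure ℝ) (θ : ℝ) (H : ℝ → ℝ) :
    Monotone (fun a => Jfun μF μh θ a H) := by
  intro a b hab
  refine EReal.sub_le_sub ?_ le_rfl
  refine EReal.coe_ennreal_le_coe_ennreal_iff.2 (lintegral_mono fun z => ?_)
  exact ENNReal.ofReal_le_ofReal (by nlinarith [sq_nonneg (H z)])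

lemma vfun_mono (μF μh : Measure ℝ) (θ : ℝ) : Monotone (fun a => vfun μF μh θ a) := by
  intro a b hab
  exact iInf_mono fun H => iInf_mono fun hH => Jfun_mono_a μF μh θ H hab


/-- the limit L = lim_{a→0+} v(a) exists and satisfies
−(1+θ)∫z dμ_F̂ ≤ L ≤ ∫z dμ_F − (1+θ)∫z dμ_F̂ < 0. -/
theorem stmt_3
    (F Fhat : StieltjesFunction ℝ) (g : ℝ → ℝ) (θ0 θ : ℝ)
    (hF_neg : ∀ z : ℝ, z < 0 → F z = 0)
    (hF_top : Tendsto (fun z => F z) atTop (nhds 1))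
    (hg_mono : MonotoneOn g (Set.Icc 0 1))
    (hg_left : ∀ p ∈ Set.Ioc (0:ℝ) 1, Tendsto g (nhdsWithin p (Set.Iio p)) (nhds (g p)))
    (hg_zero : g 0 = 0)
    (hg_zero' : Tendsto g (nhdsWithin 0 (Set.Ioi 0)) (nhds 0))
    (hg_one : g 1 = 1)
    (hg_pos : 0 < g (1 - F 0))
    (hθ0 : -1 < θ0)
    (hθ : θ = (1 + θ0) * g (1 - F 0) - 1)
    (hFhat : ∀ z : ℝ, Fhat z = if z < 0 then 0 else 1 - g (1 - F z) / g (1 - F 0))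
    (hFhat_top : Tendsto (fun z => Fhat z) atTop (nhds 1))
    (hmom : (∫⁻ z in Set.Ioi (0:ℝ), ENNReal.ofReal z ∂F.measure) <
        ENNReal.ofReal (1 + θ) * ∫⁻ z in Set.Ioi (0:ℝ), ENNReal.ofReal z ∂Fhat.measure)
    (hfin : ENNReal.ofReal (1 + θ) *
        (∫⁻ z in Set.Ioi (0:ℝ), ENNReal.ofReal z ∂Fhat.measure) < ⊤) :
    ∃ L : ℝ,
      Tendsto (fun a => vfun F.measure Fhat.measure θ a)
        (nhdsWithin 0 (Set.Ioi 0)) (nhds (L : EReal)) ∧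
      -((ENNReal.ofReal (1 + θ) *
          (∫⁻ z in Set.Ioi (0:ℝ), ENNReal.ofReal z ∂Fhat.measure)).toReal) ≤ L ∧
      L ≤ (∫⁻ z in Set.Ioi (0:ℝ), ENNReal.ofReal z ∂F.measure).toReal -
          (ENNReal.ofReal (1 + θ) *
            (∫⁻ z in Set.Ioi (0:ℝ), ENNReal.ofReal z ∂Fhat.measure)).toReal ∧
      (∫⁻ z in Set.Ioi (0:ℝ), ENNReal.ofReal z ∂F.measure).toReal -
          (ENNReal.ofReal (1 + θ) *
            (∫⁻ z in Set.Ioi (0:ℝ), ENNReal.ofReal z ∂Fhat.measure)).toReal < 0 := by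
    classical
  set A : ℝ≥0∞ := ∫⁻ z in Set.Ioi (0:ℝ), ENNReal.ofReal z ∂F.measure with hA_def
  set B : ℝ≥0∞ := ENNReal.ofReal (1 + θ) *
      ∫⁻ z in Set.Ioi (0:ℝ), ENNReal.ofReal z ∂Fhat.measure with hB_def
  have hA_fin : A ≠ ⊤ := (hmom.trans hfin).ne
  have hB_fin : B ≠ ⊤ := hfin.ne
  -- second-term bound for admissible H
  have hsec : ∀ H ∈ Adm, ENNReal.ofReal (1 + θ) *
      ∫⁻ z in Set.Ioi (0:ℝ), ENNReal.ofReal (H z) ∂Fhat.measure ≤ B := by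
    intro H hH
    refine mul_le_mul_right ?_ _
    refine setLIntegral_mono ENNReal.measurable_ofReal fun z hz => ?_
    exact ENNReal.ofReal_le_ofReal (adm_le hH (le_of_lt hz))
  -- lower bound on Jfun
  have hlow : ∀ a : ℝ, ∀ H ∈ Adm, -(B : EReal) ≤ Jfun F.measure Fhat.measure θ a H := by
    intro a H hH
    have h1 : (0 : EReal) ≤
        ((∫⁻ z in Set.Ioi (0:ℝ), ENNReal.ofReal (a / 2 * H z ^ 2 + H z) ∂F.measure : ℝ≥0∞) : EReal) :=
      EReal.coe_ennreal_nonneg _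
    calc -(B : EReal) = 0 - (B : EReal) := (zero_sub _).symm
      _ ≤ _ := EReal.sub_le_sub h1 (EReal.coe_ennreal_le_coe_ennreal_iff.2 (hsec H hH))
  have hv_low : ∀ a : ℝ, -(B : EReal) ≤ vfun F.measure Fhat.measure θ a := by
    intro a
    exact le_iInf fun H => le_iInf fun hH => hlow a H hH
  have hv_le0 : ∀ a : ℝ, vfun F.measure Fhat.measure θ a ≤ 0 := by
    intro a
    exact (iInf₂_le _ zero_mem_adm).trans_eq (Jfun_zero _ _ _ _)
  -- the limit
  have htend := (vfun_mono F.measure Fhat.measure θ).tendsto_nhdsGT 0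
  set Linf : EReal := sInf ((fun a => vfun F.measure Fhat.measure θ a) '' Set.Ioi 0) with hLinf_def
  have hLinf_low : -(B : EReal) ≤ Linf := by
    refine le_sInf ?_
    rintro x ⟨a, _, rfl⟩
    exact hv_low a
  have hLinf_le0 : Linf ≤ 0 :=
    (sInf_le (Set.mem_image_of_mem _ (Set.mem_Ioi.2 one_pos))).trans (hv_le0 1)
  have hBcoe : (B : EReal) = ((B.toReal : ℝ) : EReal) := ereal_coe_ennreal_eq hB_fin
  have hLinf_ne_bot : Linf ≠ ⊥ := by
    intro h
    rw [h, le_bot_iff, hBcoe, ← EReal.coe_neg] at hLinf_low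
    exact EReal.coe_ne_bot _ hLinf_low
  have hLinf_ne_top : Linf ≠ ⊤ :=
    ne_top_of_le_ne_top (by simp) hLinf_le0
  have hL : ((Linf.toReal : ℝ) : EReal) = Linf := EReal.coe_toReal hLinf_ne_top hLinf_ne_bot
  have hL_le0 : Linf.toReal ≤ 0 := by
    have := hLinf_le0
    rw [← hL] at this
    exact_mod_cast this
  -- total mass bound
  have hμ1 : F.measure (Set.Ioi (0:ℝ)) ≤ 1 := by
    have hbot : Tendsto (fun z => F z) atBot (𝓝 0) := by
      refine Tendsto.congr' ?_ tendsto_const_nhds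
      filter_upwards [eventually_lt_atBot (0:ℝ)] with z hz
      exact (hF_neg z hz).symm
    calc F.measure (Set.Ioi 0) ≤ F.measure Set.univ := measure_mono (Set.subset_univ _)
      _ = ENNReal.ofReal (1 - 0) := F.measure_univ hbot hF_top
      _ = 1 := by norm_num
  -- truncations
  set In : ℕ → ℝ≥0∞ := fun n => ∫⁻ z in Set.Ioi (0:ℝ), ENNReal.ofReal (min z (n:ℝ)) ∂Fhat.measure
    with hIn_def
  set Bn : ℕ → ℝ≥0∞ := fun n => ENNReal.ofReal (1 + θ) * In n with hBn_def
  have hBn_le : ∀ n, Bn n ≤ B := by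
    intro n
    refine mul_le_mul_right ?_ _
    refine setLIntegral_mono ENNReal.measurable_ofReal fun z hz => ?_
    exact ENNReal.ofReal_le_ofReal (min_le_left _ _)
  have hBn_fin : ∀ n, Bn n ≠ ⊤ := fun n => ((hBn_le n).trans_lt hfin).ne
  -- key upper bound on v a via truncations
  have key : ∀ n : ℕ, ∀ a : ℝ, 0 < a →
      vfun F.measure Fhat.measure θ a ≤
        ((ENNReal.ofReal (a / 2 * (n:ℝ) ^ 2) + A : ℝ≥0∞) : EReal) - ((Bn n : ℝ≥0∞) : EReal) := by
    intro n a ha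
    refine (iInf₂_le _ (min_mem_adm n)).trans ?_
    unfold Jfun
    refine EReal.sub_le_sub ?_ le_rfl
    refine EReal.coe_ennreal_le_coe_ennreal_iff.2 ?_
    calc ∫⁻ z in Set.Ioi (0:ℝ),
          ENNReal.ofReal (a / 2 * (min z (n:ℝ)) ^ 2 + min z (n:ℝ)) ∂F.measure
        ≤ ∫⁻ z in Set.Ioi (0:ℝ),
            (ENNReal.ofReal (a / 2 * (n:ℝ) ^ 2) + ENNReal.ofReal z) ∂F.measure := by
          refine setLIntegral_mono (measurable_const.add ENNReal.measurable_ofReal) fun z hz => ?_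
          have hz0 : (0:ℝ) < z := hz
          have h1 : min z (n:ℝ) ≤ z := min_le_left _ _
          have h2 : (min z (n:ℝ)) ^ 2 ≤ (n:ℝ) ^ 2 := by
            have h3 : (0:ℝ) ≤ min z (n:ℝ) := le_min hz0.le (by positivity)
            exact pow_le_pow_left₀ h3 (min_le_right _ _) 2
          refine le_trans (ENNReal.ofReal_le_ofReal ?_) (ENNReal.ofReal_add_le)
          have : a / 2 * (min z (n:ℝ)) ^ 2 ≤ a / 2 * (n:ℝ) ^ 2 :=
            mul_le_mul_of_nonneg_left h2 (by positivity)
          linarith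
      _ = ENNReal.ofReal (a / 2 * (n:ℝ) ^ 2) * F.measure (Set.Ioi 0) + A := by
          rw [lintegral_add_left measurable_const, setLIntegral_const]
      _ ≤ ENNReal.ofReal (a / 2 * (n:ℝ) ^ 2) * 1 + A :=
          add_le_add_left (mul_le_mul_right hμ1 _) _
      _ = ENNReal.ofReal (a / 2 * (n:ℝ) ^ 2) + A := by rw [mul_one]
  -- L ≤ A.toReal - (Bn n).toReal
  have hstep : ∀ n : ℕ, Linf.toReal ≤ A.toReal - (Bn n).toReal := by
    intro n
    have hn : ∀ a : ℝ, 0 < a →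
        Linf.toReal ≤ a / 2 * (n:ℝ) ^ 2 + A.toReal - (Bn n).toReal := by
      intro a ha
      have hfin1 : ENNReal.ofReal (a / 2 * (n:ℝ) ^ 2) + A ≠ ⊤ :=
        ENNReal.add_ne_top.2 ⟨ENNReal.ofReal_ne_top, hA_fin⟩
      have h1 : ((Linf.toReal : ℝ) : EReal) ≤
          ((ENNReal.ofReal (a / 2 * (n:ℝ) ^ 2) + A : ℝ≥0∞) : EReal) - ((Bn n : ℝ≥0∞) : EReal) := by
        rw [hL]
        exact (sInf_le (Set.mem_image_of_mem _ ha)).trans (key n a ha)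
      rw [ereal_coe_sub_coe hfin1 (hBn_fin n)] at h1
      have h2 := EReal.coe_le_coe_iff.1 h1
      rw [ENNReal.toReal_add ENNReal.ofReal_ne_top hA_fin,
        ENNReal.toReal_ofReal (by positivity)] at h2
      linarith
    refine le_of_forall_pos_le_add fun ε hε => ?_
    have h3 := hn (ε / ((n:ℝ) ^ 2 + 1)) (by positivity)
    have h4 : ε / ((n:ℝ) ^ 2 + 1) / 2 * (n:ℝ) ^ 2 ≤ ε := by
      rw [div_div, div_mul_eq_mul_div, div_le_iff₀ (by positivity)]
      nlinarith [sq_nonneg (n:ℝ), hε.le]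
    linarith
  -- monotone convergence: ⨆ Bn = B
  have hsup : (⨆ n, In n) = ∫⁻ z in Set.Ioi (0:ℝ), ENNReal.ofReal z ∂Fhat.measure := by
    have h1 : ∀ z : ℝ, (⨆ n : ℕ, ENNReal.ofReal (min z (n:ℝ))) = ENNReal.ofReal z := by
      intro z
      refine le_antisymm (iSup_le fun n => ENNReal.ofReal_le_ofReal (min_le_left _ _)) ?_
      refine le_iSup_of_le ⌈z⌉₊ ?_
      rw [min_eq_left (Nat.le_ceil z)]
    calc (⨆ n, In n)
        = ∫⁻ z in Set.Ioi (0:ℝ), ⨆ n : ℕ, ENNReal.ofReal (min z (n:ℝ)) ∂Fhat.measure :=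
          (lintegral_iSup
            (fun n => (measurable_id.min measurable_const).ennreal_ofReal)
            (fun m n hmn z =>
              ENNReal.ofReal_le_ofReal (min_le_min le_rfl (Nat.cast_le.2 hmn)))).symm
      _ = _ := lintegral_congr fun z => h1 z
  have hBsup : B = ⨆ n, Bn n := by
    rw [hB_def, ← hsup, ENNReal.mul_iSup]
  have hupper : Linf.toReal ≤ A.toReal - B.toReal := by
    have hBle : B ≤ ENNReal.ofReal (A.toReal - Linf.toReal) := by
      rw [hBsup]
      refine iSup_le fun n => ?_
      refine (ENNReal.le_ofReal_iff_toReal_le (hBn_fin n) ?_).2 ?_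
      · have := ENNReal.toReal_nonneg (a := A); linarith
      · linarith [hstep n]
    have := ENNReal.toReal_le_of_le_ofReal
      (by have := ENNReal.toReal_nonneg (a := A); linarith) hBle
    linarith
  have hstrict : A.toReal - B.toReal < 0 := by
    have := (ENNReal.toReal_lt_toReal hA_fin hB_fin).2 hmom
    linarith
  refine ⟨Linf.toReal, ?_, ?_, hupper, hstrict⟩
  · rw [show ((Linf.toReal : ℝ) : EReal) = Linf from hL]
    exact htend
  · have h5 : ((-B.toReal : ℝ) : EReal) ≤ ((Linf.toReal : ℝ) : EReal) := by
      rw [hL, EReal.coe_neg, ← hBcoe]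
      exact hLinf_low
    exact_mod_cast h5
end
end

section
/- Assume ∫_{(0,∞)} z dμ_F(z) < ∞ and ∫_{(0,∞)} z dμ_F(z) < (1+θ)·∫_{(0,∞)} z dμ_F̂(z). Then v(a) < 0 for every a ∈ (0,∞). -/
open MeasureTheory Set Filter Topology
open scoped ENNReal

noncomputable section

/-- v(a) < 0 for every a ∈ (0,∞). -/
theorem stmt_5
    (F Fhat : StieltjesFunction ℝ) (g : ℝ → ℝ) (θ0 θ : ℝ)
    (hF_neg : ∀ z : ℝ, z < 0 → F z = 0)
    (hF_top : Tendsto (fun z => F z) atTop (nhds 1))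
    (hg_mono : MonotoneOn g (Set.Icc 0 1))
    (hg_left : ∀ p ∈ Set.Ioc (0:ℝ) 1, Tendsto g (nhdsWithin p (Set.Iio p)) (nhds (g p)))
    (hg_zero : g 0 = 0)
    (hg_zero' : Tendsto g (nhdsWithin 0 (Set.Ioi 0)) (nhds 0))
    (hg_one : g 1 = 1)
    (hg_pos : 0 < g (1 - F 0))
    (hθ0 : -1 < θ0)
    (hθ : θ = (1 + θ0) * g (1 - F 0) - 1)
    (hFhat : ∀ z : ℝ, Fhat z = if z < 0 then 0 else 1 - g (1 - F z) / g (1 - F 0))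
    (hFhat_top : Tendsto (fun z => Fhat z) atTop (nhds 1))
    (hF_fin : (∫⁻ z in Set.Ioi (0:ℝ), ENNReal.ofReal z ∂F.measure) < ⊤)
    (hmom : (∫⁻ z in Set.Ioi (0:ℝ), ENNReal.ofReal z ∂F.measure) <
        ENNReal.ofReal (1 + θ) * ∫⁻ z in Set.Ioi (0:ℝ), ENNReal.ofReal z ∂Fhat.measure) :
    ∀ a ∈ Set.Ioi (0:ℝ), vfun F.measure Fhat.measure θ a < (0 : EReal) := by
  intro a ha
  rw [Set.mem_Ioi] at ha
  set μF := F.measure with hμF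
  set μH := Fhat.measure with hμH
  set c := ENNReal.ofReal (1 + θ) with hc
  -- measurability of truncations
  have hmeas : ∀ n : ℕ, Measurable fun z : ℝ => ENNReal.ofReal (min z n) :=
    fun n => (measurable_id.min measurable_const).ennreal_ofReal
  -- pointwise sup
  have hpt : ∀ z : ℝ, (⨆ n : ℕ, ENNReal.ofReal (min z n)) = ENNReal.ofReal z := by
    intro z
    apply le_antisymm
    · exact iSup_le fun n => ENNReal.ofReal_le_ofReal (min_le_left _ _)
    · have : ENNReal.ofReal z = ENNReal.ofReal (min z (⌈z⌉₊ : ℝ)) := by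
        rw [min_eq_left (Nat.le_ceil z)]
      rw [this]
      exact le_iSup (fun n : ℕ => ENNReal.ofReal (min z (n : ℝ))) ⌈z⌉₊
  have hsup : (∫⁻ z in Set.Ioi (0:ℝ), ENNReal.ofReal z ∂μH)
      = ⨆ n : ℕ, ∫⁻ z in Set.Ioi (0:ℝ), ENNReal.ofReal (min z n) ∂μH := by
    rw [← lintegral_iSup hmeas]
    · exact lintegral_congr fun z => (hpt z).symm
    · intro m n hmn z
      exact ENNReal.ofReal_le_ofReal (min_le_min le_rfl (by exact_mod_cast hmn))
  rw [hsup, ENNReal.mul_iSup] at hmom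
  obtain ⟨n, hn⟩ := lt_iSup_iff.mp hmom
  set A := ∫⁻ z in Set.Ioi (0:ℝ), ENNReal.ofReal (min z n) ∂μF with hA
  set Ah := ∫⁻ z in Set.Ioi (0:ℝ), ENNReal.ofReal (min z n) ∂μH with hAh
  set B := c * Ah with hB
  have hA_le : A ≤ ∫⁻ z in Set.Ioi (0:ℝ), ENNReal.ofReal z ∂μF :=
    lintegral_mono fun z => ENNReal.ofReal_le_ofReal (min_le_left _ _)
  have hA_lt_B : A < B := lt_of_le_of_lt hA_le hn
  have hA_top : A ≠ ⊤ := (lt_of_le_of_lt hA_le hF_fin).ne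
  have hμH_fin : μH (Set.Ioi 0) ≠ ⊤ := by
    have h1 : μH (Set.Ioi (0:ℝ)) ≤ μH (Set.Ici 0) := measure_mono Set.Ioi_subset_Ici_self
    have h2 := Fhat.measure_Ici hFhat_top 0
    rw [← hμH] at h2
    exact (lt_of_le_of_lt h1 (h2 ▸ ENNReal.ofReal_lt_top)).ne
  have hB_top : B ≠ ⊤ := by
    have hAh_le : Ah ≤ ENNReal.ofReal n * μH (Set.Ioi 0) := by
      calc Ah ≤ ∫⁻ _ in Set.Ioi (0:ℝ), ENNReal.ofReal n ∂μH :=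
            lintegral_mono fun z => ENNReal.ofReal_le_ofReal (min_le_right _ _)
        _ = ENNReal.ofReal n * μH (Set.Ioi 0) := by rw [lintegral_const, Measure.restrict_apply_univ]
    have : Ah ≠ ⊤ := (lt_of_le_of_lt hAh_le
      (ENNReal.mul_lt_top ENNReal.ofReal_lt_top (lt_top_iff_ne_top.mpr hμH_fin))).ne
    exact ENNReal.mul_ne_top ENNReal.ofReal_ne_top this
  -- real quantities
  set Ar := A.toReal with hAr
  set Br := B.toReal with hBr
  have hArBr : Ar < Br := ENNReal.toReal_lt_toReal hA_top hB_top |>.mpr hA_lt_B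
  have hAr0 : 0 ≤ Ar := ENNReal.toReal_nonneg
  set δ := Br - Ar with hδ
  have hδ0 : 0 < δ := by simp [hδ]; linarith
  set D := a * n / 2 * Ar + δ with hD
  have hD0 : 0 < D := by positivity
  set ε := min 1 (δ / D) with hε
  have hε0 : 0 < ε := lt_min one_pos (div_pos hδ0 hD0)
  have hε1 : ε ≤ 1 := min_le_left _ _
  set K := a * ε * n / 2 + 1 with hK
  have hK0 : 0 < K := by positivity
  -- key real inequality
  have hkey : K * Ar < Br := by
    have h1 : ε ≤ δ / D := min_le_right _ _
    have h2 : ε * D ≤ δ := by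
      rw [← le_div_iff₀ hD0] at *; exact h1
    have h3 : a * n / 2 * Ar < D := by simp [hD]; linarith
    have h4 : a * ε * n / 2 * Ar < δ := by
      have := mul_lt_mul_of_pos_left h3 hε0
      calc a * ε * n / 2 * Ar = ε * (a * n / 2 * Ar) := by ring
        _ < ε * D := this
        _ ≤ δ := by rw [mul_comm] at h2 ⊢; exact h2
    simp only [hK]; nlinarith
  -- the test function
  set H : ℝ → ℝ := fun z => ε * min z n with hH
  have hHAdm : H ∈ Adm := by
    have hlip : LipschitzWith 1 fun z : ℝ => min z (n : ℝ) :=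
      LipschitzWith.min_const LipschitzWith.id _
    have hHlip : LipschitzWith 1 H := by
      rw [lipschitzWith_iff_dist_le_mul]
      intro x y
      have h5 := (lipschitzWith_iff_dist_le_mul.mp hlip) x y
      have hd : dist (H x) (H y) = ε * dist (min x (n:ℝ)) (min y (n:ℝ)) := by
        simp only [hH, Real.dist_eq, ← mul_sub, abs_mul, abs_of_pos hε0]
      simp only [NNReal.coe_one, one_mul] at h5 ⊢
      rw [hd]
      nlinarith [dist_nonneg (x := min x (n:ℝ)) (y := min y (n:ℝ))]
    exact ⟨by simp [hH], fun z hz => mul_nonneg hε0.le (le_min hz (by positivity)),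
      fun x _ y _ hxy => mul_le_mul_of_nonneg_left (min_le_min hxy le_rfl) hε0.le,
      hHlip.lipschitzOnWith⟩
  -- second integral
  have hI2 : (∫⁻ z in Set.Ioi (0:ℝ), ENNReal.ofReal (H z) ∂μH) = ENNReal.ofReal ε * Ah := by
    simp only [hH]
    rw [← lintegral_const_mul _ (hmeas n)]
    congr 1
    ext z
    rw [ENNReal.ofReal_mul hε0.le]
  -- first integral bound
  have hI1 : (∫⁻ z in Set.Ioi (0:ℝ), ENNReal.ofReal (a / 2 * H z ^ 2 + H z) ∂μF)
      ≤ ENNReal.ofReal (ε * K) * A := by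
    rw [← lintegral_const_mul _ (hmeas n)]
    apply setLIntegral_mono ((measurable_const.mul (hmeas n)))
    intro z hz
    simp only [Pi.mul_apply]
    rw [← ENNReal.ofReal_mul (by positivity)]
    apply ENNReal.ofReal_le_ofReal
    have hz0 : (0:ℝ) < z := hz
    have hm0 : 0 ≤ min z (n:ℝ) := le_min hz0.le (by positivity)
    have hmn : min z (n:ℝ) ≤ n := min_le_right _ _
    simp only [hH, hK]
    nlinarith [mul_nonneg (mul_nonneg (mul_nonneg ha.le (sq_nonneg ε)) hm0) (sub_nonneg.mpr hmn)]
  -- strict comparison in ℝ≥0∞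
  have hstrict : ENNReal.ofReal (ε * K) * A < ENNReal.ofReal ε * B := by
    rw [ENNReal.ofReal_mul hε0.le, mul_assoc]
    apply ENNReal.mul_lt_mul_right (by simp [hε0]) ENNReal.ofReal_ne_top
    have hArw : A = ENNReal.ofReal Ar := (ENNReal.ofReal_toReal hA_top).symm
    have hBrw : B = ENNReal.ofReal Br := (ENNReal.ofReal_toReal hB_top).symm
    rw [hArw, hBrw, ← ENNReal.ofReal_mul hK0.le]
    exact ENNReal.ofReal_lt_ofReal_iff (by linarith [mul_nonneg hK0.le hAr0]) |>.mpr hkey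
  -- conclude J < 0
  have hJ : Jfun μF μH θ a H < 0 := by
    rw [Jfun, ← hc, hI2]
    have hS : c * (ENNReal.ofReal ε * Ah) = ENNReal.ofReal ε * B := by
      rw [hB]; ring
    rw [hS]
    set T1 := ∫⁻ z in Set.Ioi (0:ℝ), ENNReal.ofReal (a / 2 * H z ^ 2 + H z) ∂μF with hT1
    set S := ENNReal.ofReal ε * B with hSdef
    have hTS : T1 < S := lt_of_le_of_lt hI1 hstrict
    have hS_top : S ≠ ⊤ := ENNReal.mul_ne_top ENNReal.ofReal_ne_top hB_top
    have hT_top : T1 ≠ ⊤ := (lt_of_lt_of_le hTS le_top).ne_top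
    have e1 : ((T1 : ℝ≥0∞) : EReal) = ((T1.toReal : ℝ) : EReal) := by
      rw [← EReal.toReal_coe_ennreal]
      exact (EReal.coe_toReal (by simp [hT_top]) (by simp)).symm
    have e2 : ((S : ℝ≥0∞) : EReal) = ((S.toReal : ℝ) : EReal) := by
      rw [← EReal.toReal_coe_ennreal]
      exact (EReal.coe_toReal (by simp [hS_top]) (by simp)).symm
    rw [e1, e2, ← EReal.coe_sub]
    exact EReal.coe_neg'.mpr (sub_neg.mpr ((ENNReal.toReal_lt_toReal hT_top hS_top).mpr hTS))
  exact lt_of_le_of_lt (iInf₂_le H hHAdm) hJ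
end
end

section
/- Under the standing assumption, there exists a unique a* ∈ (0,∞) such that v(a*) = π − (1+θ)·∫_{(0,∞)} z dμ_F̂(z). -/
open MeasureTheory Set Filter Topology
open scoped ENNReal
open scoped NNReal

noncomputable section

namespace Stmt6Aux

/-! ### EReal helper lemmas -/

lemma eSub_coe {x y : ℝ≥0∞} (hx : x ≠ ⊤) (hy : y ≠ ⊤) :
    (x : EReal) - (y : EReal) = ((x.toReal - y.toReal : ℝ) : EReal) := by
  lift x to ℝ≥0 using hx
  lift y to ℝ≥0 using hy
  rw [EReal.coe_sub]
  norm_cast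

lemma eSub_top {y : ℝ≥0∞} (hy : y ≠ ⊤) : ((⊤ : ℝ≥0∞) : EReal) - (y : EReal) = ⊤ := by
  lift y to ℝ≥0 using hy
  rw [EReal.coe_ennreal_top]
  rw [show ((y : ℝ≥0∞) : EReal) = ((y : ℝ) : EReal) by norm_cast]
  exact EReal.top_sub_coe _

/-! ### Admissible set lemmas -/

lemma adm_zero : (fun _ : ℝ => (0:ℝ)) ∈ Adm := by
  refine ⟨rfl, fun _ _ => le_rfl, monotoneOn_const, ?_⟩
  simpa using ((LipschitzWith.const (0:ℝ)).weaken zero_le_one).lipschitzOnWith (s := Set.Ici 0)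

lemma adm_nonneg {H : ℝ → ℝ} (hH : H ∈ Adm) {z : ℝ} (hz : 0 ≤ z) : 0 ≤ H z :=
  hH.2.1 z hz

lemma adm_sub_le {H : ℝ → ℝ} (hH : H ∈ Adm) {y z : ℝ} (hy : 0 ≤ y) (hyz : y ≤ z) :
    H z - H y ≤ z - y := by
  have := hH.2.2.2.dist_le_mul z (mem_Ici.2 (hy.trans hyz)) y (mem_Ici.2 hy)
  rw [NNReal.coe_one, one_mul, Real.dist_eq, Real.dist_eq] at this
  have h2 := le_trans (le_abs_self _) this
  linarith [abs_of_nonneg (sub_nonneg.2 hyz)]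

lemma adm_le_self {H : ℝ → ℝ} (hH : H ∈ Adm) {z : ℝ} (hz : 0 ≤ z) : H z ≤ z := by
  have := adm_sub_le hH le_rfl hz
  rw [hH.1] at this
  linarith

lemma adm_mono {H : ℝ → ℝ} (hH : H ∈ Adm) {y z : ℝ} (hy : 0 ≤ y) (hyz : y ≤ z) :
    H y ≤ H z :=
  hH.2.2.1 (mem_Ici.2 hy) (mem_Ici.2 (hy.trans hyz)) hyz

lemma adm_aemeas {H : ℝ → ℝ} (hH : H ∈ Adm) (μ : Measure ℝ) :
    AEMeasurable H (μ.restrict (Set.Ioi 0)) :=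
  ((hH.2.2.2.continuousOn.mono Ioi_subset_Ici_self).aemeasurable measurableSet_Ioi)

lemma adm_min (m : ℝ) (hm : 0 ≤ m) : (fun z : ℝ => min z m) ∈ Adm := by
  refine ⟨by simp [hm], fun z hz => le_min hz hm, fun x _ y _ hxy => min_le_min hxy le_rfl, ?_⟩
  have h := (LipschitzWith.id.min (LipschitzWith.const m)).weaken
    (by norm_num : (1 ⊔ 0 : ℝ≥0) ≤ 1)
  exact h.lipschitzOnWith

/-! ### lintegral decomposition -/

lemma I1_eq (μ : Measure ℝ) {H : ℝ → ℝ} (hH : H ∈ Adm) {a : ℝ} (ha : 0 ≤ a) :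
    ∫⁻ z in Set.Ioi (0:ℝ), ENNReal.ofReal (a / 2 * H z ^ 2 + H z) ∂μ
      = ENNReal.ofReal (a/2) * (∫⁻ z in Set.Ioi (0:ℝ), ENNReal.ofReal (H z ^ 2) ∂μ)
        + ∫⁻ z in Set.Ioi (0:ℝ), ENNReal.ofReal (H z) ∂μ := by
  have hHm := adm_aemeas hH μ
  have hHnn : ∀ z, 0 ≤ z → 0 ≤ H z := hH.2.1
  have ha2 : (0:ℝ) ≤ a / 2 := by linarith
  have hcong : ∀ z ∈ Set.Ioi (0:ℝ),
      ENNReal.ofReal (a / 2 * H z ^ 2 + H z)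
        = ENNReal.ofReal (a/2) * ENNReal.ofReal (H z ^ 2) + ENNReal.ofReal (H z) := by
    intro z hz
    rw [ENNReal.ofReal_add (by positivity) (hHnn z (le_of_lt hz)), ENNReal.ofReal_mul ha2]
  rw [setLIntegral_congr_fun measurableSet_Ioi hcong]
  rw [lintegral_add_left']
  · rw [lintegral_const_mul' _ _ ENNReal.ofReal_ne_top]
  · exact (ENNReal.measurable_ofReal.comp_aemeasurable (hHm.pow aemeasurable_const)).const_mul _

/-! ### tail estimate -/

lemma tail_small (ν : Measure ℝ)
    (hfin : (∫⁻ z in Set.Ioi (0:ℝ), ENNReal.ofReal z ∂ν) ≠ ⊤) {ε : ℝ} (hε : 0 < ε) :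
    ∃ T : ℝ, 0 < T ∧ (∫⁻ z in Set.Ioi T, ENNReal.ofReal z ∂ν) ≤ ENNReal.ofReal ε := by
  set μ' := ν.withDensity (fun z => ENNReal.ofReal z) with hμ'
  have happ : ∀ T : ℝ, μ' (Set.Ioi T) = ∫⁻ z in Set.Ioi T, ENNReal.ofReal z ∂ν := by
    intro T
    rw [hμ', withDensity_apply _ measurableSet_Ioi]
  have hanti : Antitone (fun n : ℕ => Set.Ioi ((n:ℝ) + 1)) := by
    intro m n hmn
    exact Set.Ioi_subset_Ioi (by exact_mod_cast Nat.add_le_add_right hmn 1)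
  have hiInter : (⋂ n : ℕ, Set.Ioi ((n:ℝ) + 1)) = ∅ := by
    ext z
    simp only [Set.mem_iInter, Set.mem_Ioi, Set.mem_empty_iff_false, iff_false, not_forall,
      not_lt]
    obtain ⟨n, hn⟩ := exists_nat_gt z
    exact ⟨n, by linarith⟩
  have htend : Tendsto (fun n : ℕ => μ' (Set.Ioi ((n:ℝ) + 1))) atTop (nhds 0) := by
    have := tendsto_measure_iInter_atTop (μ := μ')
      (fun n => (measurableSet_Ioi).nullMeasurableSet) hanti
      ⟨0, by
        rw [happ]
        exact ne_top_of_le_ne_top hfin (lintegral_mono_set (Set.Ioi_subset_Ioi (by norm_num)))⟩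
    rw [hiInter] at this
    simpa [Function.comp_def] using this
  have : ∀ᶠ n : ℕ in atTop, μ' (Set.Ioi ((n:ℝ) + 1)) < ENNReal.ofReal ε :=
    htend.eventually_lt_const (by simp [hε])
  obtain ⟨n, hn⟩ := this.exists
  exact ⟨(n:ℝ) + 1, by positivity, by rw [← happ]; exact hn.le⟩

/-! ### the key compactness-substitute lemma -/

lemma keyL2 (F Fhat : StieltjesFunction ℝ) (g : ℝ → ℝ)
    (hF_neg : ∀ z : ℝ, z < 0 → F z = 0)
    (hF_top : Tendsto (fun z => F z) atTop (nhds 1))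
    (hg_zero : g 0 = 0)
    (hFhat : ∀ z : ℝ, Fhat z = if z < 0 then 0 else 1 - g (1 - F z) / g (1 - F 0))
    (hF_le1 : ∀ z, F z ≤ 1)
    (hF0 : F 0 < 1)
    (hFhat0 : Fhat 0 = 0)
    (hFhat_le1 : ∀ z, Fhat z ≤ 1)
    (hMν : (∫⁻ z in Set.Ioi (0:ℝ), ENNReal.ofReal z ∂Fhat.measure) ≠ ⊤)
    {β : ℝ} (hβ : 0 < β) :
    ∃ c : ℝ, 0 < c ∧ ∀ H ∈ Adm,
      ENNReal.ofReal β ≤ (∫⁻ z in Set.Ioi (0:ℝ), ENNReal.ofReal (H z) ∂Fhat.measure) →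
      ENNReal.ofReal c ≤ (∫⁻ z in Set.Ioi (0:ℝ), ENNReal.ofReal (H z ^ 2) ∂F.measure) := by
  set μ := F.measure
  set ν := Fhat.measure
  -- generic bound on the Ioc part
  have hν_Ioc : ∀ r : ℝ, ν (Set.Ioc 0 r) ≤ 1 := by
    intro r
    rw [show ν (Set.Ioc 0 r) = ENNReal.ofReal (Fhat r - Fhat 0) from Fhat.measure_Ioc 0 r,
      hFhat0, sub_zero]
    exact ENNReal.ofReal_le_one.2 (hFhat_le1 r)
  have bound_Ioc : ∀ H ∈ Adm, ∀ r : ℝ, 0 < r →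
      (∫⁻ z in Set.Ioc (0:ℝ) r, ENNReal.ofReal (H z) ∂ν) ≤ ENNReal.ofReal (H r) := by
    intro H hH r hr
    calc (∫⁻ z in Set.Ioc (0:ℝ) r, ENNReal.ofReal (H z) ∂ν)
        ≤ ∫⁻ _ in Set.Ioc (0:ℝ) r, ENNReal.ofReal (H r) ∂ν :=
          setLIntegral_mono' measurableSet_Ioc
            (fun z hz => ENNReal.ofReal_le_ofReal (adm_mono hH hz.1.le hz.2))
      _ = ENNReal.ofReal (H r) * ν (Set.Ioc 0 r) := setLIntegral_const _ _
      _ ≤ ENNReal.ofReal (H r) * 1 := mul_le_mul_right (hν_Ioc r) _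
      _ = ENNReal.ofReal (H r) := mul_one _
  have hsplit : ∀ (H : ℝ → ℝ) (r : ℝ), 0 < r →
      (∫⁻ z in Set.Ioi (0:ℝ), ENNReal.ofReal (H z) ∂ν)
        = (∫⁻ z in Set.Ioc (0:ℝ) r, ENNReal.ofReal (H z) ∂ν)
          + (∫⁻ z in Set.Ioi r, ENNReal.ofReal (H z) ∂ν) := by
    intro H r hr
    rw [← Set.Ioc_union_Ioi_eq_Ioi hr.le,
      lintegral_union measurableSet_Ioi (Set.Ioc_disjoint_Ioi le_rfl)]
  obtain ⟨T, hT, htail⟩ := tail_small ν hMν (by linarith : (0:ℝ) < β/4)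
  -- unified intermediate point s
  obtain ⟨s, hs_pos, hFs, hkey⟩ : ∃ s : ℝ, 0 < s ∧ (∀ z, z < s → F z < 1) ∧
      ∀ H ∈ Adm, ENNReal.ofReal β ≤ (∫⁻ z in Set.Ioi (0:ℝ), ENNReal.ofReal (H z) ∂ν) →
        3*β/4 ≤ H s := by
    rcases lt_or_eq_of_le (hF_le1 T) with hc | hc
    · -- F T < 1
      refine ⟨T, hT, fun z hz => lt_of_le_of_lt (F.mono hz.le) hc, ?_⟩
      intro H hH hD
      have h1 : (∫⁻ z in Set.Ioi T, ENNReal.ofReal (H z) ∂ν) ≤ ENNReal.ofReal (β/4) := by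
        refine le_trans (setLIntegral_mono' measurableSet_Ioi ?_) htail
        intro z hz
        exact ENNReal.ofReal_le_ofReal (adm_le_self hH (hT.trans hz).le)
      have h2 : ENNReal.ofReal β ≤ ENNReal.ofReal (H T) + ENNReal.ofReal (β/4) := by
        calc ENNReal.ofReal β ≤ _ := hD
          _ ≤ _ := by
            rw [hsplit H T hT]
            exact add_le_add (bound_Ioc H hH T hT) h1
      rw [← ENNReal.ofReal_add (adm_nonneg hH hT.le) (by linarith)] at h2
      have h3 := (ENNReal.ofReal_le_ofReal_iff
        (by have := adm_nonneg hH hT.le; linarith)).1 h2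
      linarith
    · -- F T = 1 : bounded support case
      set S := {z : ℝ | F z = 1} with hS
      have hne : T ∈ S := hc
      have hbdd : BddBelow S := by
        refine ⟨0, fun z hz => ?_⟩
        by_contra hz0
        push_neg at hz0
        have hz1 : (F : ℝ → ℝ) z = 1 := hz
        rw [hF_neg z hz0] at hz1
        exact zero_ne_one hz1
      set b := sInf S with hb
      have hb_le : b ≤ T := csInf_le hbdd hne
      have hFb : F b = 1 := by
        have h1 : ∀ r : Set.Ioi b, F r = 1 := by
          rintro ⟨r, hr⟩
          obtain ⟨w, hwS, hwr⟩ := (csInf_lt_iff hbdd ⟨T, hne⟩).1 hr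
          exact le_antisymm (hF_le1 r) (hwS ▸ F.mono hwr.le)
        have h2 := F.iInf_Ioi_eq b
        rw [iInf_congr h1] at h2
        haveI : Nonempty (Set.Ioi b) := ⟨⟨b+1, by simp⟩⟩
        rw [ciInf_const] at h2
        exact h2.symm
      have hb_pos : 0 < b := by
        by_contra hb0
        push_neg at hb0
        have := F.mono hb0
        rw [hFb] at this
        linarith
      have hlt : ∀ z, z < b → F z < 1 := by
        intro z hz
        refine lt_of_le_of_ne (hF_le1 z) (fun h => ?_)
        exact absurd (csInf_le hbdd (h : z ∈ S)) (not_le.2 hz)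
      have hFhat1 : ∀ z, b ≤ z → Fhat z = 1 := by
        intro z hz
        have hFz : F z = 1 := le_antisymm (hF_le1 z) (hFb ▸ F.mono hz)
        rw [hFhat z, if_neg (not_lt.2 (hb_pos.le.trans hz)), hFz, sub_self, hg_zero, zero_div,
          sub_zero]
      have hν0 : ν (Set.Ioi b) = 0 := by
        have hsub : Set.Ioi b ⊆ ⋃ n : ℕ, Set.Ioc b (b + n + 1) := by
          intro z hz
          obtain ⟨n, hn⟩ := exists_nat_gt (z - b)
          exact Set.mem_iUnion.2 ⟨n, hz, by linarith⟩
        refine measure_mono_null hsub (measure_iUnion_null fun n => ?_)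
        rw [show ν (Set.Ioc b (b + n + 1)) = ENNReal.ofReal (Fhat (b + n + 1) - Fhat b)
          from Fhat.measure_Ioc _ _, hFhat1 b le_rfl, hFhat1 (b + n + 1) (by linarith),
          sub_self, ENNReal.ofReal_zero]
      refine ⟨b, hb_pos, hlt, ?_⟩
      intro H hH hD
      have h1 : (∫⁻ z in Set.Ioi b, ENNReal.ofReal (H z) ∂ν) = 0 :=
        setLIntegral_measure_zero _ _ hν0
      have h2 : ENNReal.ofReal β ≤ ENNReal.ofReal (H b) := by
        calc ENNReal.ofReal β ≤ _ := hD
          _ ≤ _ := by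
            rw [hsplit H b hb_pos, h1, add_zero]
            exact bound_Ioc H hH b hb_pos
      have := (ENNReal.ofReal_le_ofReal_iff (adm_nonneg hH hb_pos.le)).1 h2
      linarith
  -- conclusion
  set w := max (s - β/4) 0 with hw
  have hw_nonneg : 0 ≤ w := le_max_right _ _
  have hw_lt : w < s := max_lt (by linarith) hs_pos
  have hFw_lt : F w < 1 := hFs w hw_lt
  have hFw_nonneg : 0 ≤ F w := by
    rw [← hF_neg (-1) (by norm_num)]
    exact F.mono (by linarith)
  have hbot : Tendsto (fun z => F z) atBot (nhds 0) := by
    refine Tendsto.congr' ?_ tendsto_const_nhds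
    filter_upwards [Iio_mem_atBot 0] with z hz
    exact (hF_neg z hz).symm
  have hμIoi : μ (Set.Ioi w) = ENNReal.ofReal (1 - F w) := by
    haveI := F.isProbabilityMeasure hbot hF_top
    have h1 : μ (Set.Iic w) = ENNReal.ofReal (F w) := by
      rw [F.measure_Iic hbot w, sub_zero]
    rw [show Set.Ioi w = (Set.Iic w)ᶜ by simp,
      measure_compl measurableSet_Iic (measure_ne_top μ _), h1, measure_univ,
      ENNReal.ofReal_sub 1 hFw_nonneg, ENNReal.ofReal_one]
  refine ⟨(β/2)^2 * (1 - F w), mul_pos (by positivity) (by linarith), ?_⟩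
  intro H hH hD
  have hHge : ∀ z ∈ Set.Ioi w, β/2 ≤ H z := by
    intro z hz
    have hz0 : (0:ℝ) ≤ z := hw_nonneg.trans (le_of_lt hz)
    have hHs := hkey H hH hD
    rcases le_or_gt s z with hsz | hsz
    · have := adm_mono hH hs_pos.le hsz
      linarith
    · have h1 : H s - H z ≤ s - z := adm_sub_le hH hz0 hsz.le
      have h2 : s - z ≤ β/4 := by
        have : s - β/4 ≤ w := le_max_left _ _
        have := hz
        simp only [Set.mem_Ioi] at this
        linarith
      linarith
  calc ENNReal.ofReal ((β/2)^2 * (1 - F w))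
      = ENNReal.ofReal ((β/2)^2) * ENNReal.ofReal (1 - F w) :=
        ENNReal.ofReal_mul (by positivity)
    _ = ENNReal.ofReal ((β/2)^2) * μ (Set.Ioi w) := by rw [hμIoi]
    _ = ∫⁻ _ in Set.Ioi w, ENNReal.ofReal ((β/2)^2) ∂μ := (setLIntegral_const _ _).symm
    _ ≤ ∫⁻ z in Set.Ioi w, ENNReal.ofReal (H z ^ 2) ∂μ := by
        refine setLIntegral_mono' measurableSet_Ioi (fun z hz => ?_)
        refine ENNReal.ofReal_le_ofReal ?_
        exact pow_le_pow_left₀ (by positivity) (hHge z hz) 2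
    _ ≤ ∫⁻ z in Set.Ioi (0:ℝ), ENNReal.ofReal (H z ^ 2) ∂μ :=
        lintegral_mono_set (Set.Ioi_subset_Ioi hw_nonneg)

end Stmt6Aux

open Stmt6Aux

set_option maxHeartbeats 2000000

/-- under the standing assumption there is a unique a* ∈ (0,∞) with
v(a*) = π − (1+θ)·∫_{(0,∞)} z dμ_F̂. -/
theorem stmt_6
    (F Fhat : StieltjesFunction ℝ) (g : ℝ → ℝ) (θ0 θ : ℝ)
    (hF_neg : ∀ z : ℝ, z < 0 → F z = 0)
    (hF_top : Tendsto (fun z => F z) atTop (nhds 1))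
    (hg_mono : MonotoneOn g (Set.Icc 0 1))
    (hg_left : ∀ p ∈ Set.Ioc (0:ℝ) 1, Tendsto g (nhdsWithin p (Set.Iio p)) (nhds (g p)))
    (hg_zero : g 0 = 0)
    (hg_zero' : Tendsto g (nhdsWithin 0 (Set.Ioi 0)) (nhds 0))
    (hg_one : g 1 = 1)
    (hg_pos : 0 < g (1 - F 0))
    (hθ0 : -1 < θ0)
    (hθ : θ = (1 + θ0) * g (1 - F 0) - 1)
    (hFhat : ∀ z : ℝ, Fhat z = if z < 0 then 0 else 1 - g (1 - F z) / g (1 - F 0))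
    (hFhat_top : Tendsto (fun z => Fhat z) atTop (nhds 1))
    (prem : ℝ) (hprem_pos : 0 < prem)
    (hEZ_pos : 0 < ∫⁻ z in Set.Ioi (0:ℝ), ENNReal.ofReal z ∂F.measure)
    (hEZ_lt : (∫⁻ z in Set.Ioi (0:ℝ), ENNReal.ofReal z ∂F.measure) < ENNReal.ofReal prem)
    (hprem_lt : ENNReal.ofReal prem <
        ENNReal.ofReal (1 + θ) * ∫⁻ z in Set.Ioi (0:ℝ), ENNReal.ofReal z ∂Fhat.measure)
    (hfin : ENNReal.ofReal (1 + θ) *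
        (∫⁻ z in Set.Ioi (0:ℝ), ENNReal.ofReal z ∂Fhat.measure) < ⊤)
    :
    ∃! a : ℝ, a ∈ Set.Ioi (0:ℝ) ∧
      vfun F.measure Fhat.measure θ a =
        ((prem - (ENNReal.ofReal (1 + θ) *
          (∫⁻ z in Set.Ioi (0:ℝ), ENNReal.ofReal z ∂Fhat.measure)).toReal : ℝ) : EReal) := by
  classical
  set μ : Measure ℝ := F.measure with hμdef
  set ν : Measure ℝ := Fhat.measure with hνdef
  set Mν : ℝ≥0∞ := ∫⁻ z in Set.Ioi (0:ℝ), ENNReal.ofReal z ∂ν with hMνdef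
  set Ez : ℝ≥0∞ := ∫⁻ z in Set.Ioi (0:ℝ), ENNReal.ofReal z ∂μ with hEzdef
  -- basic positivity facts
  have hθpos : 0 < 1 + θ := by
    have h1 : 0 < 1 + θ0 := by linarith
    have h2 : 0 < (1 + θ0) * g (1 - F 0) := mul_pos h1 hg_pos
    rw [hθ]; linarith
  have hMν_ne : Mν ≠ ⊤ := by
    intro h
    rw [h, ENNReal.mul_top (by simp [ENNReal.ofReal_eq_zero]; linarith)] at hfin
    exact absurd hfin (lt_irrefl _)
  have hEz_ne : Ez ≠ ⊤ := (hEZ_lt.trans ENNReal.ofReal_lt_top).ne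
  set M8 : ℝ≥0∞ := ENNReal.ofReal (1 + θ) * Mν with hM8def
  have hM8_ne : M8 ≠ ⊤ := hfin.ne
  set M : ℝ := M8.toReal with hMdef
  have hM_eq : M = (1 + θ) * Mν.toReal := by
    rw [hMdef, hM8def, ENNReal.toReal_mul, ENNReal.toReal_ofReal hθpos.le]
  set t : ℝ := prem - M with htdef
  have hprem_lt_M : prem < M := by
    have h := (ENNReal.toReal_lt_toReal ENNReal.ofReal_ne_top hM8_ne).2 hprem_lt
    rwa [ENNReal.toReal_ofReal hprem_pos.le] at h
  have ht_neg : t < 0 := by rw [htdef]; linarith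
  -- cdf facts
  have hF_le1 : ∀ z, (F : ℝ → ℝ) z ≤ 1 := fun z => Monotone.ge_of_tendsto F.mono hF_top z
  have hFhat_le1 : ∀ z, (Fhat : ℝ → ℝ) z ≤ 1 :=
    fun z => Monotone.ge_of_tendsto Fhat.mono hFhat_top z
  have hF0_lt1 : (F : ℝ → ℝ) 0 < 1 := by
    rcases lt_or_eq_of_le (hF_le1 0) with h | h
    · exact h
    · rw [h, sub_self, hg_zero] at hg_pos; linarith
  have hFhat0 : (Fhat : ℝ → ℝ) 0 = 0 := by
    rw [hFhat 0, if_neg (lt_irrefl 0), div_self hg_pos.ne']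
    ring
  have hEz_lt_prem : Ez.toReal < prem := by
    have h := (ENNReal.toReal_lt_toReal hEz_ne ENNReal.ofReal_ne_top).2 hEZ_lt
    rwa [ENNReal.toReal_ofReal hprem_pos.le] at h
  -- integral functionals
  set SS : (ℝ → ℝ) → ℝ≥0∞ := fun H => ∫⁻ z in Set.Ioi (0:ℝ), ENNReal.ofReal (H z ^ 2) ∂μ
    with hSSdef
  set LF : (ℝ → ℝ) → ℝ≥0∞ := fun H => ∫⁻ z in Set.Ioi (0:ℝ), ENNReal.ofReal (H z) ∂μ
    with hLFdef
  set DD : (ℝ → ℝ) → ℝ≥0∞ := fun H => ∫⁻ z in Set.Ioi (0:ℝ), ENNReal.ofReal (H z) ∂ν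
    with hDDdef
  have hLF_le : ∀ H ∈ Adm, LF H ≤ Ez := by
    intro H hH
    exact setLIntegral_mono' measurableSet_Ioi
      (fun z hz => ENNReal.ofReal_le_ofReal (adm_le_self hH (le_of_lt hz)))
  have hDD_le : ∀ H ∈ Adm, DD H ≤ Mν := by
    intro H hH
    exact setLIntegral_mono' measurableSet_Ioi
      (fun z hz => ENNReal.ofReal_le_ofReal (adm_le_self hH (le_of_lt hz)))
  have hLF_ne : ∀ H ∈ Adm, LF H ≠ ⊤ := fun H hH => ne_top_of_le_ne_top hEz_ne (hLF_le H hH)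
  have hDD_ne : ∀ H ∈ Adm, DD H ≠ ⊤ := fun H hH => ne_top_of_le_ne_top hMν_ne (hDD_le H hH)
  -- real versions
  set sR : (ℝ → ℝ) → ℝ := fun H => (SS H).toReal with hsRdef
  set lR : (ℝ → ℝ) → ℝ := fun H => (LF H).toReal with hlRdef
  set dR : (ℝ → ℝ) → ℝ := fun H => (DD H).toReal with hdRdef
  have hdR_le : ∀ H ∈ Adm, dR H ≤ Mν.toReal :=
    fun H hH => ENNReal.toReal_mono hMν_ne (hDD_le H hH)
  have hi2_le_M : ∀ H ∈ Adm, (1 + θ) * dR H ≤ M := by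
    intro H hH
    rw [hM_eq]
    exact mul_le_mul_of_nonneg_left (hdR_le H hH) hθpos.le
  -- J decompositions
  have hJ_eq : ∀ (a : ℝ), 0 ≤ a → ∀ H ∈ Adm, Jfun μ ν θ a H
      = ((ENNReal.ofReal (a/2) * SS H + LF H : ℝ≥0∞) : EReal)
        - ((ENNReal.ofReal (1 + θ) * DD H : ℝ≥0∞) : EReal) := by
    intro a ha H hH
    unfold Jfun
    rw [I1_eq μ hH ha]
  have hJ_real : ∀ (a : ℝ), 0 ≤ a → ∀ H ∈ Adm, SS H ≠ ⊤ →
      Jfun μ ν θ a H = (((a/2) * sR H + lR H - (1 + θ) * dR H : ℝ) : EReal) := by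
    intro a ha H hH hSS
    rw [hJ_eq a ha H hH, eSub_coe (by
        exact ENNReal.add_ne_top.2 ⟨ENNReal.mul_ne_top ENNReal.ofReal_ne_top hSS, hLF_ne H hH⟩)
      (ENNReal.mul_ne_top ENNReal.ofReal_ne_top (hDD_ne H hH))]
    congr 1
    rw [ENNReal.toReal_add (ENNReal.mul_ne_top ENNReal.ofReal_ne_top hSS) (hLF_ne H hH),
      ENNReal.toReal_mul, ENNReal.toReal_mul, ENNReal.toReal_ofReal (by linarith),
      ENNReal.toReal_ofReal hθpos.le]
  have hJ_top : ∀ (a : ℝ), 0 < a → ∀ H ∈ Adm, SS H = ⊤ → Jfun μ ν θ a H = ⊤ := by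
    intro a ha H hH hSS
    rw [hJ_eq a ha.le H hH]
    have h1 : ENNReal.ofReal (a/2) * SS H + LF H = ⊤ := by
      rw [hSS, ENNReal.mul_top (by simp [ENNReal.ofReal_eq_zero]; linarith)]
      exact top_add _
    rw [h1]
    exact eSub_top (ENNReal.mul_ne_top ENNReal.ofReal_ne_top (hDD_ne H hH))
  -- vfun basic facts
  have hv_le : ∀ (a : ℝ) (H : ℝ → ℝ), H ∈ Adm → vfun μ ν θ a ≤ Jfun μ ν θ a H :=
    fun a H hH => iInf₂_le H hH
  have hv_ge : ∀ (a : ℝ) (x : EReal), (∀ H ∈ Adm, x ≤ Jfun μ ν θ a H) → x ≤ vfun μ ν θ a :=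
    fun a x h => le_iInf₂ h
  have hexists : ∀ (a : ℝ) (x : EReal), vfun μ ν θ a < x → ∃ H ∈ Adm, Jfun μ ν θ a H < x := by
    intro a x hx
    by_contra h
    push_neg at h
    exact absurd (hv_ge a x h) (not_le.2 hx)
  have hJ0 : ∀ a : ℝ, Jfun μ ν θ a (fun _ => 0) = 0 := by
    intro a
    unfold Jfun
    norm_num
  have hv_le0 : ∀ a : ℝ, vfun μ ν θ a ≤ 0 := by
    intro a
    calc vfun μ ν θ a ≤ Jfun μ ν θ a (fun _ => 0) := hv_le a _ adm_zero
      _ = 0 := hJ0 a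
  have hv_lb : ∀ a : ℝ, 0 < a → ((-M : ℝ) : EReal) ≤ vfun μ ν θ a := by
    intro a ha
    refine hv_ge a _ (fun H hH => ?_)
    by_cases hSS : SS H = ⊤
    · rw [hJ_top a ha H hH hSS]; exact le_top
    · rw [hJ_real a ha.le H hH hSS]
      refine EReal.coe_le_coe_iff.2 ?_
      have h1 : 0 ≤ sR H := ENNReal.toReal_nonneg
      have h2 : 0 ≤ lR H := ENNReal.toReal_nonneg
      have h3 := hi2_le_M H hH
      nlinarith
  -- real-valued v
  set ρ : ℝ → ℝ := fun a => (vfun μ ν θ a).toReal with hρdef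
  have hvρ : ∀ a : ℝ, 0 < a → vfun μ ν θ a = ((ρ a : ℝ) : EReal) := by
    intro a ha
    refine (EReal.coe_toReal ?_ ?_).symm
    · exact ne_top_of_le_ne_top (by simp) (hv_le0 a)
    · exact ((EReal.bot_lt_coe _).trans_le (hv_lb a ha)).ne'
  have hρ_le0 : ∀ a : ℝ, 0 < a → ρ a ≤ 0 := by
    intro a ha
    have := hv_le0 a
    rw [hvρ a ha] at this
    exact_mod_cast this
  have hmono : ∀ a a' : ℝ, 0 < a → a ≤ a' → vfun μ ν θ a ≤ vfun μ ν θ a' := by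
    intro a a' ha haa
    refine hv_ge a' _ (fun H hH => le_trans (hv_le a H hH) ?_)
    by_cases hSS : SS H = ⊤
    · rw [hJ_top a ha H hH hSS, hJ_top a' (ha.trans_le haa) H hH hSS]
    · rw [hJ_real a ha.le H hH hSS, hJ_real a' (ha.trans_le haa).le H hH hSS]
      refine EReal.coe_le_coe_iff.2 ?_
      have h1 : (a/2) * sR H ≤ (a'/2) * sR H :=
        mul_le_mul_of_nonneg_right (by linarith) ENNReal.toReal_nonneg
      linarith
  have hρmono : ∀ a a' : ℝ, 0 < a → a ≤ a' → ρ a ≤ ρ a' := by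
    intro a a' ha haa
    have := hmono a a' ha haa
    rw [hvρ a ha, hvρ a' (ha.trans_le haa)] at this
    exact_mod_cast this
  -- Step 1: small a гives v < t
  have hstep1 : ∃ a0 : ℝ, 0 < a0 ∧ ρ a0 < t := by
    set γ : ℝ := prem - Ez.toReal with hγdef
    have hγ_pos : 0 < γ := by rw [hγdef]; linarith
    have hε'_pos : 0 < γ / (3 * (1 + θ)) := div_pos hγ_pos (by linarith)
    obtain ⟨m, hm_pos, htail⟩ := tail_small ν hMν_ne hε'_pos
    set Hm : ℝ → ℝ := fun z => min z m with hHmdef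
    have hHm : Hm ∈ Adm := adm_min m hm_pos.le
    have hSb : SS Hm ≤ ENNReal.ofReal m * LF Hm := by
      rw [show ENNReal.ofReal m * LF Hm
          = ∫⁻ z in Set.Ioi (0:ℝ), ENNReal.ofReal m * ENNReal.ofReal (Hm z) ∂μ from
        (lintegral_const_mul' _ _ ENNReal.ofReal_ne_top).symm]
      refine setLIntegral_mono' measurableSet_Ioi (fun z hz => ?_)
      rw [← ENNReal.ofReal_mul hm_pos.le]
      refine ENNReal.ofReal_le_ofReal ?_
      have h1 : Hm z ≤ m := min_le_right _ _
      have h2 : (0:ℝ) ≤ Hm z := adm_nonneg hHm (le_of_lt hz)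
      have h3 : Hm z * Hm z ≤ m * Hm z := mul_le_mul_of_nonneg_right h1 h2
      calc Hm z ^ 2 = Hm z * Hm z := pow_two _
        _ ≤ m * Hm z := h3
    have hSS_ne : SS Hm ≠ ⊤ :=
      ne_top_of_le_ne_top (ENNReal.mul_ne_top ENNReal.ofReal_ne_top (hLF_ne Hm hHm)) hSb
    have hlR_nonneg : (0:ℝ) ≤ lR Hm := ENNReal.toReal_nonneg
    have hlREz : lR Hm ≤ Ez.toReal := ENNReal.toReal_mono hEz_ne (hLF_le Hm hHm)
    have hsR_le : sR Hm ≤ m * prem := by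
      have h1 := ENNReal.toReal_mono
        (ENNReal.mul_ne_top ENNReal.ofReal_ne_top (hLF_ne Hm hHm)) hSb
      rw [ENNReal.toReal_mul, ENNReal.toReal_ofReal hm_pos.le] at h1
      have h4 : m * lR Hm ≤ m * prem :=
        mul_le_mul_of_nonneg_left (by linarith) hm_pos.le
      exact le_trans h1 h4
    have hlR_le : lR Hm ≤ prem - γ := by rw [hγdef]; linarith
    have hdRlow : Mν.toReal ≤ dR Hm + γ / (3*(1+θ)) := by
      have hsplitm : Mν = (∫⁻ z in Set.Ioc (0:ℝ) m, ENNReal.ofReal z ∂ν)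
          + (∫⁻ z in Set.Ioi m, ENNReal.ofReal z ∂ν) := by
        rw [hMνdef, ← Set.Ioc_union_Ioi_eq_Ioi hm_pos.le,
          lintegral_union measurableSet_Ioi (Set.Ioc_disjoint_Ioi le_rfl)]
      have hIoc : (∫⁻ z in Set.Ioc (0:ℝ) m, ENNReal.ofReal z ∂ν) ≤ DD Hm := by
        have heq : (∫⁻ z in Set.Ioc (0:ℝ) m, ENNReal.ofReal z ∂ν)
            = ∫⁻ z in Set.Ioc (0:ℝ) m, ENNReal.ofReal (Hm z) ∂ν := by
          refine setLIntegral_congr_fun measurableSet_Ioc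
            (fun z hz => ?_)
          show ENNReal.ofReal z = ENNReal.ofReal (min z m)
          rw [min_eq_left hz.2]
        rw [heq]
        exact lintegral_mono_set Set.Ioc_subset_Ioi_self
      have h3 : Mν ≤ DD Hm + ENNReal.ofReal (γ/(3*(1+θ))) := by
        rw [hsplitm]
        exact add_le_add hIoc htail
      have h4 := ENNReal.toReal_mono
        (ENNReal.add_ne_top.2 ⟨hDD_ne Hm hHm, ENNReal.ofReal_ne_top⟩) h3
      rwa [ENNReal.toReal_add (hDD_ne Hm hHm) ENNReal.ofReal_ne_top,
        ENNReal.toReal_ofReal hε'_pos.le] at h4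
    set a0 : ℝ := γ / (3 * (m * prem + 1)) with ha0def
    have hmp_pos : (0:ℝ) < m * prem + 1 := by nlinarith
    have ha0_pos : 0 < a0 := div_pos hγ_pos (by linarith)
    refine ⟨a0, ha0_pos, ?_⟩
    have hval : (a0/2) * sR Hm + lR Hm - (1+θ) * dR Hm < t := by
      have hsR_nonneg : (0:ℝ) ≤ sR Hm := ENNReal.toReal_nonneg
      have e1 : (a0/2) * sR Hm ≤ γ/3 := by
        have h5 : a0 * (m*prem+1) = γ/3 := by
          rw [ha0def]
          field_simp
        have h6 : (a0/2) * sR Hm ≤ (a0/2) * (m*prem) :=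
          mul_le_mul_of_nonneg_left hsR_le (by linarith)
        nlinarith
      have e4 : (1+θ) * Mν.toReal - γ/3 ≤ (1+θ) * dR Hm := by
        have h7 := mul_le_mul_of_nonneg_left hdRlow hθpos.le
        rw [mul_add] at h7
        have e3 : (1+θ) * (γ/(3*(1+θ))) = γ/3 := by
          field_simp
        linarith
      rw [htdef, hM_eq]
      linarith
    have hlt : vfun μ ν θ a0 < ((t:ℝ):EReal) := by
      refine lt_of_le_of_lt (hv_le a0 Hm hHm) ?_
      rw [hJ_real a0 ha0_pos.le Hm hHm hSS_ne]
      exact_mod_cast hval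
    rw [hvρ a0 ha0_pos] at hlt
    exact_mod_cast hlt
  -- key lemma instantiation
  set β1 : ℝ := (M - prem) / (2 * (1 + θ)) with hβ1def
  have hβ1_pos : 0 < β1 := by
    rw [hβ1def]
    exact div_pos (by linarith) (by linarith)
  obtain ⟨c, hc, hL2⟩ := keyL2 F Fhat g hF_neg hF_top hg_zero hFhat hF_le1 hF0_lt1
    hFhat0 hFhat_le1 hMν_ne hβ1_pos
  have hL2R : ∀ H ∈ Adm, SS H ≠ ⊤ → β1 ≤ dR H → c ≤ sR H := by
    intro H hH hSS hβd
    have h1 : ENNReal.ofReal β1 ≤ DD H := by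
      rw [show DD H = ENNReal.ofReal (dR H) from (ENNReal.ofReal_toReal (hDD_ne H hH)).symm]
      exact ENNReal.ofReal_le_ofReal hβd
    have h2 := hL2 H hH h1
    have h3 := ENNReal.toReal_mono hSS h2
    rwa [ENNReal.toReal_ofReal hc.le] at h3
  obtain ⟨a0, ha0_pos, ha0_lt⟩ := hstep1
  -- Step 2: large a gives v ≥ t
  set a1 : ℝ := max a0 (2 * prem / c) with ha1def
  have ha0_le_a1 : a0 ≤ a1 := le_max_left _ _
  have ha1_pos : 0 < a1 := lt_of_lt_of_le ha0_pos ha0_le_a1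
  have ha1c : prem ≤ (a1/2) * c := by
    have h1 : 2 * prem / c ≤ a1 := le_max_right _ _
    rw [div_le_iff₀ hc] at h1
    linarith
  have hstep2 : t ≤ ρ a1 := by
    have h : ((t : ℝ) : EReal) ≤ vfun μ ν θ a1 := by
      refine hv_ge a1 _ (fun H hH => ?_)
      by_cases hSS : SS H = ⊤
      · rw [hJ_top a1 ha1_pos H hH hSS]; exact le_top
      · rw [hJ_real a1 ha1_pos.le H hH hSS]
        refine EReal.coe_le_coe_iff.2 ?_
        have h1 : 0 ≤ sR H := ENNReal.toReal_nonneg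
        have h2 : 0 ≤ lR H := ENNReal.toReal_nonneg
        have h3 := hi2_le_M H hH
        by_cases hd : (1 + θ) * dR H ≤ M - prem
        · rw [htdef]; nlinarith
        · push_neg at hd
          have hβd : β1 ≤ dR H := by
            rw [hβ1def, div_le_iff₀ (by linarith : (0:ℝ) < 2 * (1 + θ))]
            nlinarith
          have hcs := hL2R H hH hSS hβd
          have h4 : (a1/2) * c ≤ (a1/2) * sR H :=
            mul_le_mul_of_nonneg_left hcs (by linarith)
          rw [htdef]; nlinarith
    rw [hvρ a1 ha1_pos] at h
    exact_mod_cast h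
  -- Lipschitz-type estimate
  set K : ℝ := 2 * (M + 1) / a0 with hKdef
  have hK_pos : 0 < K := by
    rw [hKdef]
    exact div_pos (by linarith) ha0_pos
  have hlip : ∀ a a' ε : ℝ, a0 ≤ a → a ≤ a' → 0 < ε → ε ≤ 1 →
      ρ a' ≤ ρ a + (a' - a)/2 * K + ε := by
    intro a a' ε ha haa hε hε1
    have hap : 0 < a := lt_of_lt_of_le ha0_pos ha
    have hap' : 0 < a' := lt_of_lt_of_le hap haa
    have hva : vfun μ ν θ a < ((ρ a + ε : ℝ) : EReal) := by
      rw [hvρ a hap]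
      exact_mod_cast (by linarith : ρ a < ρ a + ε)
    obtain ⟨H, hH, hJH⟩ := hexists a _ hva
    have hSSne : SS H ≠ ⊤ := by
      intro h
      rw [hJ_top a hap H hH h] at hJH
      exact absurd hJH not_top_lt
    rw [hJ_real a hap.le H hH hSSne] at hJH
    have hlt : (a/2) * sR H + lR H - (1 + θ) * dR H < ρ a + ε := by exact_mod_cast hJH
    have h1 : 0 ≤ sR H := ENNReal.toReal_nonneg
    have h2 : 0 ≤ lR H := ENNReal.toReal_nonneg
    have h3 := hi2_le_M H hH
    have h4 := hρ_le0 a hap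
    have hsK : sR H ≤ K := by
      rw [hKdef, le_div_iff₀ ha0_pos]
      have h5 : sR H * a0 ≤ sR H * a := mul_le_mul_of_nonneg_left ha h1
      nlinarith
    have h6 : vfun μ ν θ a' ≤ ((ρ a + ε + (a' - a)/2 * K : ℝ) : EReal) := by
      refine le_trans (hv_le a' H hH) ?_
      rw [hJ_real a' hap'.le H hH hSSne]
      refine EReal.coe_le_coe_iff.2 ?_
      have h7 : (a' - a)/2 * sR H ≤ (a' - a)/2 * K :=
        mul_le_mul_of_nonneg_left hsK (by linarith)
      nlinarith
    rw [hvρ a' hap'] at h6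
    have := EReal.coe_le_coe_iff.1 h6
    linarith
  -- the supremum
  set A : Set ℝ := {a : ℝ | a0 ≤ a ∧ ρ a < t} with hAdef
  have hA0 : a0 ∈ A := ⟨le_rfl, ha0_lt⟩
  have hA_bdd : BddAbove A := by
    refine ⟨a1, fun a ha => ?_⟩
    by_contra hcon
    push_neg at hcon
    have := hρmono a1 a ha1_pos hcon.le
    have ha2 := ha.2
    have ha1' := hstep2
    linarith
  set astar : ℝ := sSup A with hastardef
  have hstar_ge : a0 ≤ astar := le_csSup hA_bdd hA0
  have hstar_pos : 0 < astar := lt_of_lt_of_le ha0_pos hstar_ge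
  have hnotinA : ∀ a : ℝ, astar < a → t ≤ ρ a := by
    intro a haa
    by_contra hcon
    push_neg at hcon
    have : a ∈ A := ⟨hstar_ge.trans haa.le, hcon⟩
    exact absurd (le_csSup hA_bdd this) (not_le.2 haa)
  have claim1 : t ≤ ρ astar := by
    by_contra hcon
    push_neg at hcon
    set δ : ℝ := t - ρ astar with hδdef
    have hδ_pos : 0 < δ := by rw [hδdef]; linarith
    set a' : ℝ := astar + δ / (2 * (K + 1)) with ha'def
    have ha'_gt : astar < a' := by
      rw [ha'def]
      have : 0 < δ / (2 * (K + 1)) := div_pos hδ_pos (by linarith)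
      linarith
    set ε : ℝ := min (δ/2) 1 with hεdef
    have hε_pos : 0 < ε := lt_min (by linarith) one_pos
    have hε_le1 : ε ≤ 1 := min_le_right _ _
    have hε_le : ε ≤ δ/2 := min_le_left _ _
    have hl := hlip astar a' ε hstar_ge ha'_gt.le hε_pos hε_le1
    have hKbound : (a' - astar)/2 * K ≤ δ/4 := by
      have h1 : a' - astar = δ / (2 * (K + 1)) := by rw [ha'def]; ring
      rw [h1, div_div, div_mul_eq_mul_div,
        div_le_div_iff₀ (by nlinarith : (0:ℝ) < 2 * (K + 1) * 2) (by norm_num : (0:ℝ) < 4)]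
      nlinarith
    have := hnotinA a' ha'_gt
    linarith
  have claim2 : ρ astar ≤ t := by
    by_contra hcon
    push_neg at hcon
    set δ : ℝ := ρ astar - t with hδdef
    have hδ_pos : 0 < δ := by rw [hδdef]; linarith
    set η : ℝ := δ / (2 * (K + 1)) with hηdef
    have hη_pos : 0 < η := div_pos hδ_pos (by linarith)
    obtain ⟨a, haA, hagt⟩ := exists_lt_of_lt_csSup ⟨a0, hA0⟩
      (by linarith : astar - η < astar)
    have ha_le : a ≤ astar := le_csSup hA_bdd haA
    have ha0a : a0 ≤ a := haA.1
    have haρ : ρ a < t := haA.2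
    set ε : ℝ := min (δ/4) 1 with hεdef
    have hε_pos : 0 < ε := lt_min (by linarith) one_pos
    have hl := hlip a astar ε ha0a ha_le hε_pos (min_le_right _ _)
    have hKbound : (astar - a)/2 * K ≤ δ/4 := by
      have h1 : astar - a ≤ η := by linarith
      have h2 : (astar - a)/2 * K ≤ η/2 * K := by
        refine mul_le_mul_of_nonneg_right ?_ hK_pos.le
        linarith
      rw [hηdef] at h2
      refine h2.trans ?_
      rw [div_div, div_mul_eq_mul_div,
        div_le_div_iff₀ (by nlinarith : (0:ℝ) < 2 * (K + 1) * 2) (by norm_num : (0:ℝ) < 4)]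
      nlinarith
    have hε_le : ε ≤ δ/4 := min_le_left _ _
    linarith
  have hρstar : ρ astar = t := le_antisymm claim2 claim1
  have hv_star : vfun μ ν θ astar = ((t : ℝ) : EReal) := by
    rw [hvρ astar hstar_pos, hρstar]
  -- uniqueness
  have huniq : ∀ p q : ℝ, 0 < p → p < q →
      vfun μ ν θ p = ((t : ℝ) : EReal) → vfun μ ν θ q = ((t : ℝ) : EReal) → False := by
    intro p q hp hpq hvp hvq
    set ε : ℝ := min ((M - prem)/2) ((q - p)/2 * (c/2)) with hεdef
    have hε_pos : 0 < ε := by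
      refine lt_min (by linarith) ?_
      have h1 : 0 < (q - p)/2 := by linarith
      have h2 : 0 < c/2 := by linarith
      exact mul_pos h1 h2
    obtain ⟨H, hH, hJq⟩ := hexists q ((t + ε : ℝ) : EReal)
      (by rw [hvq]; exact_mod_cast (by linarith : t < t + ε))
    have hSSne : SS H ≠ ⊤ := by
      intro h
      rw [hJ_top q (hp.trans hpq) H hH h] at hJq
      exact absurd hJq not_top_lt
    rw [hJ_real q (hp.trans hpq).le H hH hSSne] at hJq
    have hlt : (q/2) * sR H + lR H - (1 + θ) * dR H < t + ε := by exact_mod_cast hJq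
    have hge : t ≤ (p/2) * sR H + lR H - (1 + θ) * dR H := by
      have h := hv_le p H hH
      rw [hvp, hJ_real p hp.le H hH hSSne] at h
      exact_mod_cast h
    have h1 : 0 ≤ sR H := ENNReal.toReal_nonneg
    have h2 : 0 ≤ lR H := ENNReal.toReal_nonneg
    have hsub : (q - p)/2 * sR H < ε := by nlinarith
    have hsR_lt : sR H < c/2 := by
      have hε_le2 : ε ≤ (q - p)/2 * (c/2) := min_le_right _ _
      have h3 : (q - p)/2 * sR H < (q - p)/2 * (c/2) := lt_of_lt_of_le hsub hε_le2
      have h4 : 0 < (q - p)/2 := by linarith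
      exact lt_of_mul_lt_mul_left h3 h4.le
    have hβd : β1 ≤ dR H := by
      have hε_le1 : ε ≤ (M - prem)/2 := min_le_left _ _
      have h5 : (M - prem)/2 ≤ (1 + θ) * dR H := by
        rw [htdef] at hlt hge
        nlinarith
      rw [hβ1def, div_le_iff₀ (by linarith : (0:ℝ) < 2 * (1 + θ))]
      nlinarith
    have := hL2R H hH hSSne hβd
    linarith
  -- conclusion
  refine ⟨astar, ⟨Set.mem_Ioi.2 hstar_pos, ?_⟩, ?_⟩
  · exact hv_star
  · rintro x ⟨hx_pos, hx_eq⟩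
    rw [Set.mem_Ioi] at hx_pos
    rcases lt_trichotomy x astar with h | h | h
    · exact absurd (huniq x astar hx_pos h hx_eq hv_star) (fun f => f)
    · exact h
    · exact absurd (huniq astar x hstar_pos h hv_star hx_eq) (fun f => f)
end
end
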